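/- arXiv:1603.00403 — 7 statements merged into one kernel-verified Lean document; each statement's English description precedes it below -/
import Mathlib

section
/- For every 3-dimensional subspace U of V, the subspace T_U := ⋀²U∧V of ⋀³V, spanned by all u∧u'∧v with u,u' ∈ U and v ∈ V, has dimension 10 and is η-isotropic (η(ω,ω') = 0 for all ω,ω' ∈ T_U); hence T_U is a Lagrangian subspace of the 20-dimensional symplectic space (⋀³V, η). -/
open ExteriorAlgebra Module

noncomputable section

variable {V : Type*} [AddCommGroup V] [Module ℂ V]

/-- The product of elements of the `j`-th and `k`-th exterior powers lies in the
`(j+k)`-th exterior power. -/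
theorem mul_mem_exteriorPower {j k : ℕ} {x y : ExteriorAlgebra ℂ V}
    (hx : x ∈ ⋀[ℂ]^j V) (hy : y ∈ ⋀[ℂ]^k V) : x * y ∈ ⋀[ℂ]^(j + k) V := by
  rw [exteriorPower, pow_add]
  exact Submodule.mul_mem_mul hx hy

theorem ι_mem_one (a : V) : ι ℂ a ∈ ⋀[ℂ]^1 V := by
  rw [exteriorPower, pow_one]
  exact LinearMap.mem_range_self _ a

theorem triple_mem (a b c : V) : ι ℂ a * ι ℂ b * ι ℂ c ∈ ⋀[ℂ]^3 V :=
  mul_mem_exteriorPower (mul_mem_exteriorPower (ι_mem_one a) (ι_mem_one b)) (ι_mem_one c)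

/-- `T_U = ⋀²U ∧ V`: the subspace of `⋀³V` spanned by all `u ∧ u' ∧ v` with `u, u' ∈ U`
and `v ∈ V`. -/
def TU (U : Submodule ℂ V) : Submodule ℂ (ExteriorAlgebra ℂ V) :=
  Submodule.span ℂ {x | ∃ u ∈ U, ∃ u' ∈ U, ∃ v : V, x = ι ℂ u * ι ℂ u' * ι ℂ v}

theorem TU_le (U : Submodule ℂ V) : TU U ≤ ⋀[ℂ]^3 V := by
  rw [TU, Submodule.span_le]
  rintro x ⟨u, -, u', -, v, rfl⟩
  exact triple_mem u u' v

lemma triple3 (f : Fin 3 → V) : ιMulti ℂ 3 f = ι ℂ (f 0) * ι ℂ (f 1) * ι ℂ (f 2) := by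
  rw [ιMulti_apply]
  simp [List.ofFn_succ, mul_assoc]

lemma hex6 (f : Fin 6 → V) : ιMulti ℂ 6 f =
    ι ℂ (f 0) * ι ℂ (f 1) * ι ℂ (f 2) * ι ℂ (f 3) * ι ℂ (f 4) * ι ℂ (f 5) := by
  rw [ιMulti_apply]
  simp only [List.ofFn_succ, List.ofFn_zero, List.prod_cons, List.prod_nil, mul_one, mul_assoc]
  rfl

lemma mul33 (f g : Fin 3 → V) :
    ιMulti ℂ 3 f * ιMulti ℂ 3 g = ιMulti ℂ 6 (Fin.append f g) := by
  rw [triple3, triple3, hex6]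
  have h0 : Fin.append f g 0 = f 0 := Fin.append_left f g 0
  have h1 : Fin.append f g 1 = f 1 := Fin.append_left f g 1
  have h2 : Fin.append f g 2 = f 2 := Fin.append_left f g 2
  have h3 : Fin.append f g 3 = g 0 := Fin.append_right f g 0
  have h4 : Fin.append f g 4 = g 1 := Fin.append_right f g 1
  have h5 : Fin.append f g 5 = g 2 := Fin.append_right f g 2
  rw [h0, h1, h2, h3, h4, h5]; simp [mul_assoc]

abbrev Kap : Type := Fin 3 ⊕ Fin 3

def goodS (S : Finset Kap) : Prop := S.card = 3 ∧ 2 ≤ (S.filter (fun x => x.isLeft = true)).card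

instance : DecidablePred goodS := fun S => by unfold goodS; infer_instance

/-- chosen enumeration of a 3-element subset -/
def enum (S : Finset Kap) (hS : S.card = 3) : Fin 3 → Kap :=
  fun i => ((Finset.equivFinOfCardEq hS).symm i : Kap)

lemma enum_mem (S : Finset Kap) (hS : S.card = 3) (i : Fin 3) : enum S hS i ∈ S :=
  ((Finset.equivFinOfCardEq hS).symm i).2

lemma enum_inj (S : Finset Kap) (hS : S.card = 3) : Function.Injective (enum S hS) := by
  intro i j h
  have := Subtype.ext h (p := (· ∈ S))
  simpa using (Finset.equivFinOfCardEq hS).symm.injective this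

lemma enum_surj (S : Finset Kap) (hS : S.card = 3) {a : Kap} (ha : a ∈ S) :
    ∃ i, enum S hS i = a :=
  ⟨Finset.equivFinOfCardEq hS ⟨a, ha⟩, by simp [enum]⟩

/-- the basic wedge monomials -/
def wMon (b : Basis Kap ℂ V) (S : Finset Kap) (hS : S.card = 3) : ExteriorAlgebra ℂ V :=
  ιMulti ℂ 3 (fun i => b (enum S hS i))

/-- Any wedge of three basis vectors with index set `S` is a sign times `wMon`. -/
lemma wedge_eq_sign_smul (b : Basis Kap ℂ V) (e : Fin 3 → Kap) (he : Function.Injective e)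
    (S : Finset Kap) (hS : S.card = 3) (hmem : ∀ i, e i ∈ S) :
    ∃ σ : Equiv.Perm (Fin 3), ιMulti ℂ 3 (fun i => b (e i)) =
      Equiv.Perm.sign σ • wMon b S hS := by
  let g : Fin 3 → Fin 3 := fun i => Finset.equivFinOfCardEq hS ⟨e i, hmem i⟩
  have hg : Function.Injective g := by
    intro i j h
    exact he (by simpa using congrArg Subtype.val ((Finset.equivFinOfCardEq hS).injective h))
  let σ : Equiv.Perm (Fin 3) := Equiv.ofBijective g (Finite.injective_iff_bijective.mp hg)
  refine ⟨σ, ?_⟩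
  have key : (fun i => b (enum S hS i)) ∘ σ = fun i => b (e i) := by
    funext i
    simp [enum, σ, g, Equiv.ofBijective_apply]
  rw [wMon, ← key, AlternatingMap.map_perm]
def phi (b : Basis Kap ℂ V) (T : Finset Kap) (hT : T.card = 3) :
    ExteriorAlgebra ℂ V →ₗ[ℂ] ℂ :=
  liftAlternating <| Function.update (fun _ => 0) 3 <|
    (Matrix.detRowAlternating (n := Fin 3) (R := ℂ)).compLinearMap
      (LinearMap.pi fun j => b.coord (enum T hT j))

lemma phi_wMon (b : Basis Kap ℂ V) (T : Finset Kap) (hT : T.card = 3)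
    (S : Finset Kap) (hS : S.card = 3) :
    phi b T hT (wMon b S hS) = if S = T then 1 else 0 := by
  rw [phi, wMon, liftAlternating_apply_ιMulti, Function.update_self]
  have hrfl : ((Matrix.detRowAlternating (n := Fin 3) (R := ℂ)).compLinearMap
      (LinearMap.pi fun j => b.coord (enum T hT j))) (fun i => b (enum S hS i)) =
      Matrix.det (Matrix.of fun i j => b.coord (enum T hT j) (b (enum S hS i))) := rfl
  rw [hrfl]
  have hmat : ∀ i j, b.coord (enum T hT j) (b (enum S hS i))
      = if enum S hS i = enum T hT j then (1:ℂ) else 0 := by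
    intro i j
    simp [Basis.coord_apply, Basis.repr_self, Finsupp.single_apply]
  by_cases h : S = T
  · subst h
    rw [if_pos rfl]
    have : (Matrix.of fun i j => b.coord (enum S hT j) (b (enum S hS i))) = 1 := by
      ext i j
      rw [Matrix.of_apply, hmat i j]
      by_cases hij : i = j
      · subst hij
        have : enum S hS i = enum S hT i := by congr
        simp [this, Matrix.one_apply]
      · have : enum S hS i ≠ enum S hT j := by
          have : enum S hS = enum S hT := by congr
          rw [this]
          exact fun hc => hij (enum_inj S hT hc)
        rw [if_neg this, Matrix.one_apply_ne hij]
    rw [this, Matrix.det_one]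
  · rw [if_neg h]
    have hTS : ¬ T ⊆ S := fun hsub => h (Finset.eq_of_subset_of_card_le hsub (by omega)).symm
    obtain ⟨a, haT, haS⟩ := Finset.not_subset.mp hTS
    obtain ⟨j0, hj0⟩ : ∃ j, enum T hT j = a :=
      ⟨Finset.equivFinOfCardEq hT ⟨a, haT⟩, by simp [enum]⟩
    apply Matrix.det_eq_zero_of_column_eq_zero j0
    intro i
    rw [Matrix.of_apply, hmat i j0, if_neg]
    intro hc
    apply haS
    rw [← hj0, ← hc]
    exact enum_mem S hS i
lemma wMon_li (b : Basis Kap ℂ V) :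
    LinearIndependent ℂ (fun S : {S : Finset Kap // S.card = 3} => wMon b S.1 S.2) := by
  rw [Fintype.linearIndependent_iff]
  intro g hg T
  have := congrArg (phi b T.1 T.2) hg
  rw [map_sum, map_zero] at this
  simp only [map_smul, phi_wMon] at this
  rw [Finset.sum_eq_single T] at this
  · simpa using this
  · intro S _ hST
    rw [if_neg (fun hc => hST (Subtype.ext hc)), smul_eq_mul, mul_zero]
  · intro h
    exact absurd (Finset.mem_univ T) h




def wGood (b : Basis Kap ℂ V) : {S : Finset Kap // goodS S} → ExteriorAlgebra ℂ V :=
  (fun S : {S : Finset Kap // S.card = 3} => wMon b S.1 S.2) ∘ (fun S => ⟨S.1, S.2.1⟩)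

lemma wGood_li (b : Basis Kap ℂ V) : LinearIndependent ℂ (wGood b) := by
  apply (wMon_li b).comp
  intro S T h
  have : S.1 = T.1 := by simpa [Subtype.ext_iff] using h
  exact Subtype.ext this

lemma finrank_span_wGood (b : Basis Kap ℂ V) :
    finrank ℂ (Submodule.span ℂ (Set.range (wGood b))) = 10 := by
  rw [finrank_span_eq_card (wGood_li b)]
  decide


section Main
variable (b : Basis Kap ℂ V) (U : Submodule ℂ V)

lemma two_left {S : Finset Kap} (hS : S.card = 3)
    (h2 : 2 ≤ (S.filter (fun x => x.isLeft = true)).card)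
    {a c : Fin 3} (hac : a ≠ c) :
    (enum S hS a).isLeft = true ∨ (enum S hS c).isLeft = true := by
  by_contra hcon
  push_neg at hcon
  obtain ⟨h1, h2'⟩ := hcon
  have hsub : S.filter (fun x => x.isLeft = true) ∪ {enum S hS a, enum S hS c} ⊆ S := by
    apply Finset.union_subset (Finset.filter_subset _ _)
    intro x hx
    rcases Finset.mem_insert.mp hx with rfl | hx
    · exact enum_mem S hS a
    · rw [Finset.mem_singleton.mp hx]; exact enum_mem S hS c
  have hdisj : Disjoint (S.filter (fun x => x.isLeft = true)) {enum S hS a, enum S hS c} := by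
    rw [Finset.disjoint_left]
    intro x hx hx2
    have hxl := (Finset.mem_filter.mp hx).2
    rcases Finset.mem_insert.mp hx2 with rfl | hx2
    · exact h1 hxl
    · rw [Finset.mem_singleton.mp hx2] at hxl; exact h2' hxl
  have hcard2 : ({enum S hS a, enum S hS c} : Finset Kap).card = 2 := by
    rw [Finset.card_insert_of_notMem (by
      simp only [Finset.mem_singleton]
      exact fun hc => hac (enum_inj S hS hc)), Finset.card_singleton]
  have := Finset.card_le_card hsub
  rw [Finset.card_union_of_disjoint hdisj, hcard2, hS] at this
  omega

lemma memU_of_isLeft (hbU : ∀ p : Fin 3, b (Sum.inl p) ∈ U) {x : Kap} (hx : x.isLeft = true) : b x ∈ U := by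
  obtain ⟨p, rfl⟩ := Sum.isLeft_iff.mp hx
  exact hbU p

lemma wMon_mem_TU (hbU : ∀ p : Fin 3, b (Sum.inl p) ∈ U) {S : Finset Kap} (hgood : goodS S) :
    wMon b S hgood.1 ∈ TU U := by
  obtain ⟨hS, h2⟩ := hgood
  set e := enum S hS with he
  by_cases h0 : (e 0).isLeft = true
  · by_cases h1 : (e 1).isLeft = true
    · apply Submodule.subset_span
      exact ⟨b (e 0), memU_of_isLeft b U hbU h0, b (e 1), memU_of_isLeft b U hbU h1,
        b (e 2), triple3 _⟩
    · -- e 2 is left; swap positions 1 and 2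
      have h2l : (e 2).isLeft = true := (two_left hS h2 (by decide)).resolve_left h1
      have hswap := (ιMulti ℂ 3 (M := V)).map_swap (fun i => b (e i)) (by decide : (1 : Fin 3) ≠ 2)
      have : wMon b S hS = -(ιMulti ℂ 3 ((fun i => b (e i)) ∘ Equiv.swap (1 : Fin 3) 2)) := by
        rw [hswap, neg_neg, wMon]
      rw [this]
      apply neg_mem
      apply Submodule.subset_span
      refine ⟨b (e 0), memU_of_isLeft b U hbU h0, b (e 2), memU_of_isLeft b U hbU h2l,
        b (e 1), ?_⟩
      rw [triple3]
      simp only [Function.comp_apply, show (Equiv.swap (1:Fin 3) 2) 0 = 0 from by decide,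
        show (Equiv.swap (1:Fin 3) 2) 1 = 2 from by decide,
        show (Equiv.swap (1:Fin 3) 2) 2 = 1 from by decide]
  · -- e 1 and e 2 are left; swap positions 0 and 2
    have h1l : (e 1).isLeft = true := (two_left hS h2 (by decide : (0:Fin 3) ≠ 1)).resolve_left h0
    have h2l : (e 2).isLeft = true := (two_left hS h2 (by decide : (0:Fin 3) ≠ 2)).resolve_left h0
    have hswap := (ιMulti ℂ 3 (M := V)).map_swap (fun i => b (e i)) (by decide : (0 : Fin 3) ≠ 2)
    have : wMon b S hS = -(ιMulti ℂ 3 ((fun i => b (e i)) ∘ Equiv.swap (0 : Fin 3) 2)) := by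
      rw [hswap, neg_neg, wMon]
    rw [this]
    apply neg_mem
    apply Submodule.subset_span
    refine ⟨b (e 2), memU_of_isLeft b U hbU h2l, b (e 1), memU_of_isLeft b U hbU h1l,
      b (e 0), ?_⟩
    rw [triple3]
    simp only [Function.comp_apply, show (Equiv.swap (0:Fin 3) 2) 0 = 2 from by decide,
      show (Equiv.swap (0:Fin 3) 2) 1 = 1 from by decide,
      show (Equiv.swap (0:Fin 3) 2) 2 = 0 from by decide]

lemma inj3 {α : Type*} {a b c : α} (h1 : a ≠ b) (h2 : a ≠ c) (h3 : b ≠ c) :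
    Function.Injective ![a, b, c] := by
  intro x y h
  fin_cases x <;> fin_cases y <;> simp_all

lemma tri_span (W : Submodule ℂ (ExteriorAlgebra ℂ V)) (s t : Set V)
    (h : ∀ x ∈ s, ∀ y ∈ s, ∀ z ∈ t, ι ℂ x * ι ℂ y * ι ℂ z ∈ W) :
    ∀ x ∈ Submodule.span ℂ s, ∀ y ∈ Submodule.span ℂ s, ∀ z ∈ Submodule.span ℂ t,
      ι ℂ x * ι ℂ y * ι ℂ z ∈ W := by
  have hz : ∀ x y : V, (∀ z ∈ t, ι ℂ x * ι ℂ y * ι ℂ z ∈ W) →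
      ∀ z ∈ Submodule.span ℂ t, ι ℂ x * ι ℂ y * ι ℂ z ∈ W := by
    intro x y hgen z hzz
    induction hzz using Submodule.span_induction with
    | mem a ha => exact hgen a ha
    | zero => simp
    | add a c _ _ ha hc => rw [map_add, mul_add]; exact W.add_mem ha hc
    | smul r a _ ha => rw [map_smul, mul_smul_comm]; exact W.smul_mem r ha
  have hy : ∀ x : V, (∀ y ∈ s, ∀ z ∈ t, ι ℂ x * ι ℂ y * ι ℂ z ∈ W) →
      ∀ y ∈ Submodule.span ℂ s, ∀ z ∈ t, ι ℂ x * ι ℂ y * ι ℂ z ∈ W := by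
    intro x hgen y hyy
    induction hyy using Submodule.span_induction with
    | mem a ha => exact hgen a ha
    | zero => intro z _; simp
    | add a c _ _ ha hc =>
      intro z hzt
      have : ι ℂ x * ι ℂ (a + c) * ι ℂ z = ι ℂ x * ι ℂ a * ι ℂ z + ι ℂ x * ι ℂ c * ι ℂ z := by
        rw [map_add, mul_add, add_mul]
      rw [this]; exact W.add_mem (ha z hzt) (hc z hzt)
    | smul r a _ ha =>
      intro z hzt
      have : ι ℂ x * ι ℂ (r • a) * ι ℂ z = r • (ι ℂ x * ι ℂ a * ι ℂ z) := by
        rw [map_smul, mul_smul_comm, smul_mul_assoc]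
      rw [this]; exact W.smul_mem r (ha z hzt)
  have hx : ∀ x ∈ Submodule.span ℂ s, ∀ y ∈ s, ∀ z ∈ t, ι ℂ x * ι ℂ y * ι ℂ z ∈ W := by
    intro x hxx
    induction hxx using Submodule.span_induction with
    | mem a ha => exact h a ha
    | zero => intro y _ z _; simp
    | add a c _ _ ha hc =>
      intro y hys z hzt
      have : ι ℂ (a + c) * ι ℂ y * ι ℂ z = ι ℂ a * ι ℂ y * ι ℂ z + ι ℂ c * ι ℂ y * ι ℂ z := by
        rw [map_add, add_mul, add_mul]
      rw [this]; exact W.add_mem (ha y hys z hzt) (hc y hys z hzt)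
    | smul r a _ ha =>
      intro y hys z hzt
      have : ι ℂ (r • a) * ι ℂ y * ι ℂ z = r • (ι ℂ a * ι ℂ y * ι ℂ z) := by
        rw [map_smul, smul_mul_assoc, smul_mul_assoc]
      rw [this]; exact W.smul_mem r (ha y hys z hzt)
  intro x hxs y hys z hzt
  exact hz x y (hy x (hx x hxs) y hys) z hzt

lemma gen_mem (i j : Fin 3) (k : Kap) :
    ι ℂ (b (Sum.inl i)) * ι ℂ (b (Sum.inl j)) * ι ℂ (b k) ∈
      Submodule.span ℂ (Set.range (wGood b)) := by
  set e : Fin 3 → Kap := ![Sum.inl i, Sum.inl j, k] with he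
  have he0 : e 0 = Sum.inl i := rfl
  have he1 : e 1 = Sum.inl j := rfl
  have he2 : e 2 = k := rfl
  have hprod : ι ℂ (b (Sum.inl i)) * ι ℂ (b (Sum.inl j)) * ι ℂ (b k)
      = ιMulti ℂ 3 (fun l => b (e l)) := by rw [triple3, he0, he1, he2]
  rw [hprod]
  by_cases h1 : (Sum.inl i : Kap) = Sum.inl j
  · rw [AlternatingMap.map_eq_zero_of_eq _ _ (i := 0) (j := 1)
      (by rw [he0, he1, h1]) (by decide)]
    exact Submodule.zero_mem _
  by_cases h2 : (Sum.inl i : Kap) = k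
  · rw [AlternatingMap.map_eq_zero_of_eq _ _ (i := 0) (j := 2)
      (by rw [he0, he2, h2]) (by decide)]
    exact Submodule.zero_mem _
  by_cases h3 : (Sum.inl j : Kap) = k
  · rw [AlternatingMap.map_eq_zero_of_eq _ _ (i := 1) (j := 2)
      (by rw [he1, he2, h3]) (by decide)]
    exact Submodule.zero_mem _
  · have hinj : Function.Injective e := inj3 h1 h2 h3
    set S : Finset Kap := Finset.image e Finset.univ with hSdef
    have hS : S.card = 3 := by
      rw [hSdef, Finset.card_image_of_injective _ hinj, Finset.card_univ]
      simp
    have hmem : ∀ l, e l ∈ S := fun l => Finset.mem_image_of_mem e (Finset.mem_univ l)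
    have hgood : goodS S := by
      refine ⟨hS, ?_⟩
      have hsub : ({Sum.inl i, Sum.inl j} : Finset Kap) ⊆
          S.filter (fun x => x.isLeft = true) := by
        intro x hx
        rcases Finset.mem_insert.mp hx with rfl | hx
        · exact Finset.mem_filter.mpr ⟨he0 ▸ hmem 0, rfl⟩
        · rw [Finset.mem_singleton.mp hx]
          exact Finset.mem_filter.mpr ⟨he1 ▸ hmem 1, rfl⟩
      have hc2 : ({Sum.inl i, Sum.inl j} : Finset Kap).card = 2 := by
        rw [Finset.card_insert_of_notMem (by simpa using h1), Finset.card_singleton]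
      calc 2 = ({Sum.inl i, Sum.inl j} : Finset Kap).card := hc2.symm
        _ ≤ _ := Finset.card_le_card hsub
    obtain ⟨σ, hσ⟩ := wedge_eq_sign_smul b e hinj S hS hmem
    rw [hσ]
    have hsmul : (Equiv.Perm.sign σ : ℤˣ) • wMon b S hS
        = ((Equiv.Perm.sign σ : ℤ) : ℂ) • wMon b S hS := by
      rw [Int.cast_smul_eq_zsmul]
      rfl
    rw [hsmul]
    apply Submodule.smul_mem
    apply Submodule.subset_span
    exact ⟨⟨S, hgood⟩, rfl⟩

lemma TU_le_span (hUspan : U ≤ Submodule.span ℂ (Set.range fun p : Fin 3 => b (Sum.inl p))) :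
    TU U ≤ Submodule.span ℂ (Set.range (wGood b)) := by
  rw [TU, Submodule.span_le]
  rintro x ⟨u, hu, u', hu', z, rfl⟩
  refine tri_span _ _ _ ?_ u (hUspan hu) u' (hUspan hu') z
    (by rw [b.span_eq]; trivial)
  rintro _ ⟨i, rfl⟩ _ ⟨j, rfl⟩ _ ⟨k, rfl⟩
  exact gen_mem b i j k

lemma wMon_mul_wMon {S T : Finset Kap} (hSg : goodS S) (hTg : goodS T) :
    wMon b S hSg.1 * wMon b T hTg.1 = 0 := by
  rw [wMon, wMon, mul33]
  have hX := hSg.2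
  have hY := hTg.2
  have huniv : ((Finset.univ : Finset Kap).filter (fun x => x.isLeft = true)).card = 3 := by
    decide
  have hsub : S.filter (fun x => x.isLeft = true) ∪ T.filter (fun x => x.isLeft = true)
      ⊆ (Finset.univ : Finset Kap).filter (fun x => x.isLeft = true) := by
    intro x hx
    rcases Finset.mem_union.mp hx with hx | hx <;>
      exact Finset.mem_filter.mpr ⟨Finset.mem_univ x, (Finset.mem_filter.mp hx).2⟩
  have hUle := Finset.card_le_card hsub
  rw [huniv] at hUle
  have hie := Finset.card_union_add_card_inter (S.filter (fun x => x.isLeft = true))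
    (T.filter (fun x => x.isLeft = true))
  have hpos : 0 < ((S.filter (fun x => x.isLeft = true)) ∩
      (T.filter (fun x => x.isLeft = true))).card := by omega
  obtain ⟨a, ha⟩ := Finset.card_pos.mp hpos
  have haS : a ∈ S := (Finset.mem_filter.mp (Finset.mem_inter.mp ha).1).1
  have haT : a ∈ T := (Finset.mem_filter.mp (Finset.mem_inter.mp ha).2).1
  obtain ⟨i, hi⟩ := enum_surj S hSg.1 haS
  obtain ⟨j, hj⟩ := enum_surj T hTg.1 haT
  apply AlternatingMap.map_eq_zero_of_eq _ _
    (i := Fin.castAdd 3 i) (j := Fin.natAdd 3 j)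
  · rw [Fin.append_left, Fin.append_right, hi, hj]
  · intro hc
    have := congrArg Fin.val hc
    simp only [Fin.coe_castAdd, Fin.coe_natAdd] at this
    omega

lemma span_range_wGood_eq (hbU : ∀ p : Fin 3, b (Sum.inl p) ∈ U)
    (hUspan : U ≤ Submodule.span ℂ (Set.range fun p : Fin 3 => b (Sum.inl p))) :
    TU U = Submodule.span ℂ (Set.range (wGood b)) := by
  refine le_antisymm (TU_le_span b U hUspan) ?_
  rw [Submodule.span_le]
  rintro _ ⟨⟨S, hg⟩, rfl⟩
  exact wMon_mem_TU b U hbU hg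

lemma TU_mul_eq_zero (hbU : ∀ p : Fin 3, b (Sum.inl p) ∈ U)
    (hUspan : U ≤ Submodule.span ℂ (Set.range fun p : Fin 3 => b (Sum.inl p)))
    {x y : ExteriorAlgebra ℂ V} (hx : x ∈ TU U) (hy : y ∈ TU U) : x * y = 0 := by
  rw [span_range_wGood_eq b U hbU hUspan] at hx hy
  have hle : Submodule.span ℂ (Set.range (wGood b)) * Submodule.span ℂ (Set.range (wGood b))
      ≤ ⊥ := by
    rw [Submodule.span_mul_span, Submodule.span_le]
    rintro z hz
    rw [Set.mem_mul] at hz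
    obtain ⟨p, ⟨Sg, rfl⟩, q, ⟨Tg, rfl⟩, rfl⟩ := hz
    simp only [SetLike.mem_coe, Submodule.mem_bot]
    exact wMon_mul_wMon b Sg.2 Tg.2
  simpa using hle (Submodule.mul_mem_mul hx hy)

lemma finrank_TU (hbU : ∀ p : Fin 3, b (Sum.inl p) ∈ U)
    (hUspan : U ≤ Submodule.span ℂ (Set.range fun p : Fin 3 => b (Sum.inl p))) :
    finrank ℂ (TU U) = 10 := by
  rw [span_range_wGood_eq b U hbU hUspan]
  exact finrank_span_wGood b

end Main

theorem exists_good_basis (V : Type*) [AddCommGroup V] [Module ℂ V] [FiniteDimensional ℂ V]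
    (h6 : finrank ℂ V = 6) (U : Submodule ℂ V) (hU : finrank ℂ U = 3) :
    ∃ b : Basis Kap ℂ V, (∀ p : Fin 3, b (Sum.inl p) ∈ U) ∧
      U ≤ Submodule.span ℂ (Set.range fun p : Fin 3 => b (Sum.inl p)) := by
  classical
  let bU : Basis (Fin 3) ℂ U := Module.finBasisOfFinrankEq ℂ U hU
  set v : Fin 3 → V := fun i => (bU i : V) with hvdef
  have hv : LinearIndependent ℂ v := bU.linearIndependent.map' U.subtype U.ker_subtype
  have hvr : LinearIndepOn ℂ id (Set.range v) := (linearIndepOn_id_range_iff hv.injective).mpr hv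
  let B := Basis.extend hvr
  letI : Fintype (hvr.extend (Set.subset_univ (Set.range v))) :=
    FiniteDimensional.fintypeBasisIndex B
  have hcardI : Fintype.card (hvr.extend (Set.subset_univ (Set.range v))) = 6 := by
    rw [← finrank_eq_card_basis B, h6]
  let m : Fin 3 → (hvr.extend (Set.subset_univ (Set.range v))) :=
    fun i => ⟨v i, Basis.subset_extend hvr (Set.mem_range_self i)⟩
  have hm : Function.Injective m := by
    intro i j h
    have h2 := congrArg Subtype.val h
    exact hv.injective h2
  have hcards : Fintype.card {x // x ∈ Set.range m} + Fintype.card {x // x ∉ Set.range m} = 6 := by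
    rw [← Fintype.card_sum, Fintype.card_congr (Equiv.sumCompl (· ∈ Set.range m))]
    exact hcardI
  have hcardL : Fintype.card {x // x ∈ Set.range m} = 3 := by
    rw [Fintype.card_congr (Equiv.ofInjective m hm).symm]
    simp
  have hcardR : (3 : ℕ) = Fintype.card {x // x ∉ Set.range m} := by omega
  let E : Kap ≃ (hvr.extend (Set.subset_univ (Set.range v))) :=
    (Equiv.sumCongr (Equiv.ofInjective m hm) (Fintype.equivOfCardEq (by simpa using hcardR)))
      |>.trans (Equiv.sumCompl (· ∈ Set.range m))
  let b : Basis Kap ℂ V := B.reindex E.symm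
  have hb_inl : ∀ p : Fin 3, b (Sum.inl p) = v p := by
    intro p
    have hE : E (Sum.inl p) = m p := by
      simp [E, Equiv.sumCompl_apply_inl]
    have : b (Sum.inl p) = B (E (Sum.inl p)) := by
      rw [Basis.reindex_apply, Equiv.symm_symm]
    rw [this, hE]
    exact congrFun (Basis.coe_extend hvr) (m p)
  refine ⟨b, fun p => ?_, ?_⟩
  · rw [hb_inl p]
    exact (bU p).2
  · have hUv : Submodule.span ℂ (Set.range v) = U := by
      have himg : Set.range v = U.subtype '' Set.range bU := by
        ext x
        simp [hvdef]
      rw [himg, Submodule.span_image, Basis.span_eq, Submodule.map_subtype_top]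
    rw [show (fun p : Fin 3 => b (Sum.inl p)) = v from funext hb_inl, hUv]

/-- For every 3-dimensional subspace `U` of the 6-dimensional space `V`,
the subspace `T_U = ⋀²U ∧ V` of `⋀³V` has dimension 10 and is `η`-isotropic; hence it is a
Lagrangian subspace of the 20-dimensional symplectic space `(⋀³V, η)`. -/
theorem statement1 (V : Type*) [AddCommGroup V] [Module ℂ V] [FiniteDimensional ℂ V]
    (h6 : finrank ℂ V = 6)
    (vol : (⋀[ℂ]^6 V) →ₗ[ℂ] ℂ) (hvol : vol ≠ 0)
    (U : Submodule ℂ V) (hU : finrank ℂ U = 3) :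
    finrank ℂ (TU U) = 10 ∧
    ∀ x (hx : x ∈ TU U) y (hy : y ∈ TU U),
      vol ⟨x * y, mul_mem_exteriorPower (TU_le U hx) (TU_le U hy)⟩ = 0 := by
  obtain ⟨b, hbU, hUspan⟩ := exists_good_basis V h6 U hU
  constructor
  · exact finrank_TU b U hbU hUspan
  · intro x hx y hy
    have h0 : x * y = 0 := TU_mul_eq_zero b U hbU hUspan hx hy
    have hz : (⟨x * y, mul_mem_exteriorPower (TU_le U hx) (TU_le U hy)⟩ :
        (⋀[ℂ]^(3+3) V)) = 0 := by
      ext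
      simpa using h0
    rw [hz, map_zero]
end
end

section
/- Let U and U' be 3-dimensional subspaces of V, and let ⋀³U' denote the line in ⋀³V spanned by u₁'∧u₂'∧u₃' for a basis u₁',u₂',u₃' of U'. Then ⋀³U' ⊆ T_U if and only if dim(U ∩ U') ≥ 2. (This is the linear-algebraic content of the description of the intersection of the embedded projective tangent space ℙ(T_U) to the Grassmannian G(3,V) with G(3,V) as the cone C_U with vertex [U] over the Segre embedding of ℙ(⋀²U)×ℙ(V/U).) -/
open ExteriorAlgebra Module

noncomputable section

variable {V : Type*} [AddCommGroup V] [Module ℂ V]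

/-- `⋀³U'`: the subspace of `⋀³V` spanned by all `a ∧ b ∧ c` with `a, b, c ∈ U'`; for a
3-dimensional `U'` this is the line spanned by `u₁' ∧ u₂' ∧ u₃'` for a basis of `U'`. -/
def cube (U' : Submodule ℂ V) : Submodule ℂ (ExteriorAlgebra ℂ V) :=
  Submodule.span ℂ {x | ∃ a ∈ U', ∃ b ∈ U', ∃ c ∈ U', x = ι ℂ a * ι ℂ b * ι ℂ c}


lemma swap_ι (x y : V) : ι ℂ x * ι ℂ y = -(ι ℂ y * ι ℂ x) :=
  eq_neg_of_add_eq_zero_left (ι_add_mul_swap x y)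

lemma mem_TU₁ {U : Submodule ℂ V} {u u' : V} (hu : u ∈ U) (hu' : u' ∈ U) (v : V) :
    ι ℂ u * ι ℂ u' * ι ℂ v ∈ TU U :=
  Submodule.subset_span ⟨u, hu, u', hu', v, rfl⟩

lemma mem_TU₂ {U : Submodule ℂ V} {u u' : V} (hu : u ∈ U) (hu' : u' ∈ U) (v : V) :
    ι ℂ u * ι ℂ v * ι ℂ u' ∈ TU U := by
  have : ι ℂ u * ι ℂ v * ι ℂ u' = -(ι ℂ u * ι ℂ u' * ι ℂ v) := by
    rw [mul_assoc, swap_ι v u', mul_neg, mul_assoc]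
  rw [this]
  exact neg_mem (mem_TU₁ hu hu' v)

lemma mem_TU₃ {U : Submodule ℂ V} {u u' : V} (hu : u ∈ U) (hu' : u' ∈ U) (v : V) :
    ι ℂ v * ι ℂ u * ι ℂ u' ∈ TU U := by
  have : ι ℂ v * ι ℂ u * ι ℂ u' = -(ι ℂ u * ι ℂ v * ι ℂ u') := by
    rw [swap_ι v u, neg_mul]
  rw [this]
  exact neg_mem (mem_TU₂ hu hu' v)

lemma zw₁ (w x : V) : ι ℂ w * ι ℂ w * ι ℂ x = 0 := by rw [ι_sq_zero, zero_mul]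
lemma zw₂ (w x : V) : ι ℂ w * ι ℂ x * ι ℂ w = 0 := by
  rw [mul_assoc, swap_ι x w, mul_neg, ← mul_assoc, ι_sq_zero, zero_mul, neg_zero]
lemma zw₃ (w x : V) : ι ℂ x * ι ℂ w * ι ℂ w = 0 := by
  rw [mul_assoc, ι_sq_zero, mul_zero]

lemma backward [FiniteDimensional ℂ V] (U U' : Submodule ℂ V) (hU' : finrank ℂ U' = 3)
    (h2 : 2 ≤ finrank ℂ ↥(U ⊓ U')) : cube U' ≤ TU U := by
  -- find w such that every element of U' is (element of U ⊓ U') + multiple of w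
  obtain ⟨w, hwmem⟩ : ∃ w : V, ∀ x ∈ U', ∃ k ∈ U ⊓ U', ∃ c : ℂ, x = k + c • w := by
    by_cases hKU' : U' ≤ U ⊓ U'
    · exact ⟨0, fun x hx => ⟨x, hKU' hx, 0, by simp⟩⟩
    · obtain ⟨w, hwU', hwK⟩ := SetLike.not_le_iff_exists.mp hKU'
      have hle : U ⊓ U' ⊔ Submodule.span ℂ {w} ≤ U' :=
        sup_le inf_le_right ((Submodule.span_singleton_le_iff_mem w U').mpr hwU')
      have hlt : U ⊓ U' < U ⊓ U' ⊔ Submodule.span ℂ {w} :=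
        lt_of_le_of_ne le_sup_left (fun h => hwK (h ▸ (le_sup_right : _ ≤ U ⊓ U' ⊔ Submodule.span ℂ {w})
          (Submodule.mem_span_singleton_self w)))
      have h3 : 3 ≤ finrank ℂ ↥(U ⊓ U' ⊔ Submodule.span ℂ {w}) :=
        le_trans (by omega) (Nat.succ_le_of_lt (Submodule.finrank_lt_finrank_of_lt hlt))
      have heq : U ⊓ U' ⊔ Submodule.span ℂ {w} = U' :=
        Submodule.eq_of_le_of_finrank_le hle (hU' ▸ h3)
      refine ⟨w, fun x hx => ?_⟩
      rw [← heq] at hx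
      obtain ⟨k, hk, y, hy, rfl⟩ := Submodule.mem_sup.mp hx
      obtain ⟨c, rfl⟩ := Submodule.mem_span_singleton.mp hy
      exact ⟨k, hk, c, rfl⟩
  rw [cube, Submodule.span_le]
  rintro x ⟨a, ha, b, hb, c, hc, rfl⟩
  obtain ⟨ka, hka, α, rfl⟩ := hwmem a ha
  obtain ⟨kb, hkb, β, rfl⟩ := hwmem b hb
  obtain ⟨kc, hkc, γ, rfl⟩ := hwmem c hc
  simp only [SetLike.mem_coe, map_add, map_smul]
  have expand : ∀ A B C A' B' C' : ExteriorAlgebra ℂ V,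
      (A + A') * (B + B') * (C + C') =
      A*B*C + A*B*C' + A*B'*C + A*B'*C' + A'*B*C + A'*B*C' + A'*B'*C + A'*B'*C' := by
    intros; noncomm_ring
  rw [expand]
  have hka' : ka ∈ U := hka.1
  have hkb' : kb ∈ U := hkb.1
  have hkc' : kc ∈ U := hkc.1
  refine add_mem (add_mem (add_mem (add_mem (add_mem (add_mem (add_mem ?_ ?_) ?_) ?_) ?_) ?_) ?_) ?_
  · exact mem_TU₁ hka' hkb' kc
  · simp only [mul_smul_comm, smul_mul_assoc]
    exact Submodule.smul_mem _ _ (mem_TU₁ hka' hkb' w)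
  · simp only [mul_smul_comm, smul_mul_assoc]
    exact Submodule.smul_mem _ _ (mem_TU₂ hka' hkc' w)
  · simp only [mul_smul_comm, smul_mul_assoc, zw₃, smul_zero]
    exact zero_mem _
  · simp only [mul_smul_comm, smul_mul_assoc]
    exact Submodule.smul_mem _ _ (mem_TU₃ hkb' hkc' w)
  · simp only [mul_smul_comm, smul_mul_assoc, zw₂, smul_zero]
    exact zero_mem _
  · simp only [mul_smul_comm, smul_mul_assoc, zw₁, smul_zero]
    exact zero_mem _
  · simp only [mul_smul_comm, smul_mul_assoc, zw₁, smul_zero]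
    exact zero_mem _


def fam (g : V [⋀^Fin 3]→ₗ[ℂ] ℂ) : ∀ i : ℕ, V [⋀^Fin i]→ₗ[ℂ] ℂ := fun i =>
  match i with
  | 3 => g
  | _ => 0

lemma lift_triple (g : V [⋀^Fin 3]→ₗ[ℂ] ℂ) (a b c : V) :
    liftAlternating (R := ℂ) (fam g) (ι ℂ a * ι ℂ b * ι ℂ c) = g ![a, b, c] := by
  rw [mul_assoc, liftAlternating_ι_mul, liftAlternating_ι_mul, liftAlternating_ι]
  show ((fam g 3).curryLeft a).curryLeft b ![c] = _
  rw [AlternatingMap.curryLeft_apply_apply, AlternatingMap.curryLeft_apply_apply]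
  rfl

/-- The determinant form attached to three functionals. -/
def detForm (f0 f1 f2 : V →ₗ[ℂ] ℂ) : V [⋀^Fin 3]→ₗ[ℂ] ℂ :=
  (Matrix.detRowAlternating).compLinearMap (LinearMap.pi ![f0, f1, f2])

lemma detForm_apply (f0 f1 f2 : V →ₗ[ℂ] ℂ) (a b c : V) :
    detForm f0 f1 f2 ![a, b, c] =
      f0 a * (f1 b * f2 c) - f0 a * (f2 b * f1 c) - f1 a * (f0 b * f2 c)
        + f1 a * (f2 b * f0 c) + f2 a * (f0 b * f1 c) - f2 a * (f1 b * f0 c) := by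
  rw [detForm, AlternatingMap.compLinearMap_apply]
  show Matrix.det (Matrix.of fun j => (LinearMap.pi ![f0, f1, f2]) (![a, b, c] j)) = _
  rw [Matrix.det_fin_three]
  simp [LinearMap.pi_apply]
  ring

lemma forward [FiniteDimensional ℂ V] (U U' : Submodule ℂ V)
    (hU' : finrank ℂ U' = 3)
    (hlt : finrank ℂ ↥(U ⊓ U') < 2) : ¬ cube U' ≤ TU U := by
  -- step 1: find v1 v2 in U' independent mod U
  classical
  have hK'rank : finrank ℂ ↥(Submodule.comap U'.subtype U) < 2 := by
    rw [← Submodule.finrank_map_subtype_eq U', Submodule.map_comap_subtype, inf_comm U' U]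
    exact hlt
  obtain ⟨W', hW'⟩ := Submodule.exists_isCompl (Submodule.comap U'.subtype U)
  have hW'rank : 2 ≤ finrank ℂ ↥W' := by
    have := Submodule.finrank_add_eq_of_isCompl hW'
    rw [hU'] at this
    omega
  set b := finBasis ℂ ↥W' with hb
  have h2r : 2 ≤ finrank ℂ ↥W' := hW'rank
  set i0 : Fin (finrank ℂ ↥W') := ⟨0, by omega⟩ with hi0
  set i1 : Fin (finrank ℂ ↥W') := ⟨1, by omega⟩ with hi1
  set u1 : ↥U' := ↑(b i0) with hu1
  set u2 : ↥U' := ↑(b i1) with hu2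
  set v1 : V := ↑u1 with hv1
  set v2 : V := ↑u2 with hv2
  have hne : i0 ≠ i1 := by
    simp [hi0, hi1, Fin.ext_iff]
  have hli : LinearIndependent ℂ ![b i0, b i1] := by
    have hinj : Function.Injective ![i0, i1] := by
      intro x y hxy
      fin_cases x <;> fin_cases y <;> simp_all [hne, hne.symm]
    have hcomp : ⇑b ∘ ![i0, i1] = ![b i0, b i1] := by
      ext x; fin_cases x <;> rfl
    have := b.linearIndependent.comp ![i0, i1] hinj
    rwa [hcomp] at this
  have hv12 : ∀ c1 c2 : ℂ, c1 • v1 + c2 • v2 ∈ U → c1 = 0 ∧ c2 = 0 := by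
    intro c1 c2 h
    have hy : (c1 • u1 + c2 • u2 : ↥U') ∈ Submodule.comap U'.subtype U := by
      simpa using h
    have hyW : (c1 • u1 + c2 • u2 : ↥U') ∈ W' :=
      W'.add_mem (W'.smul_mem _ (b i0).2) (W'.smul_mem _ (b i1).2)
    have h0 : (c1 • u1 + c2 • u2 : ↥U') = 0 :=
      (Submodule.disjoint_def.mp hW'.disjoint) _ hy hyW
    have h0' : c1 • b i0 + c2 • b i1 = 0 := by
      apply Subtype.coe_injective
      push_cast
      simpa using h0
    exact hli.eq_zero_of_pair h0'
  -- find v0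
  have hnle : ¬ U' ≤ Submodule.span ℂ {v1, v2} := by
    intro hle
    have h1 : finrank ℂ ↥U' ≤ finrank ℂ ↥(Submodule.span ℂ {v1, v2}) :=
      Submodule.finrank_mono hle
    have h2 : finrank ℂ ↥(Submodule.span ℂ ({v1, v2} : Set V)) ≤ 2 := by
      have := finrank_span_finset_le_card (R := ℂ) ({v1, v2} : Finset V)
      have hc : ({v1, v2} : Finset V).card ≤ 2 :=
        le_trans (Finset.card_insert_le _ _) (by simp)
      have hsets : (({v1, v2} : Finset V) : Set V) = ({v1, v2} : Set V) := by
        simp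
      rw [← hsets]
      exact le_trans this hc
    omega
  obtain ⟨v0, hv0U', hv0⟩ := SetLike.not_le_iff_exists.mp hnle
  -- functionals
  obtain ⟨f0, hf00, hf0bot⟩ :=
    Submodule.exists_dual_map_eq_bot_of_notMem hv0 inferInstance
  have hf0 : ∀ x ∈ Submodule.span ℂ ({v1, v2} : Set V), f0 x = 0 := by
    intro x hx
    have : f0 x ∈ Submodule.map f0 (Submodule.span ℂ ({v1, v2} : Set V)) :=
      Submodule.mem_map_of_mem hx
    rw [hf0bot] at this
    simpa using this
  have hf0v1 : f0 v1 = 0 := hf0 v1 (Submodule.subset_span (by simp))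
  have hf0v2 : f0 v2 = 0 := hf0 v2 (Submodule.subset_span (by simp))
  have h1mem : v1 ∉ U ⊔ Submodule.span ℂ {v2} := by
    intro h
    obtain ⟨u, hu, y, hy, hsum⟩ := Submodule.mem_sup.mp h
    obtain ⟨c, rfl⟩ := Submodule.mem_span_singleton.mp hy
    have : (1 : ℂ) • v1 + (-c) • v2 ∈ U := by
      have : (1 : ℂ) • v1 + (-c) • v2 = u := by
        rw [one_smul, neg_smul, ← hsum]; abel
      rw [this]; exact hu
    exact one_ne_zero (hv12 1 (-c) this).1
  have h2mem : v2 ∉ U ⊔ Submodule.span ℂ {v1} := by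
    intro h
    obtain ⟨u, hu, y, hy, hsum⟩ := Submodule.mem_sup.mp h
    obtain ⟨c, rfl⟩ := Submodule.mem_span_singleton.mp hy
    have : (-c : ℂ) • v1 + (1 : ℂ) • v2 ∈ U := by
      have : (-c : ℂ) • v1 + (1 : ℂ) • v2 = u := by
        rw [one_smul, neg_smul, ← hsum]; abel
      rw [this]; exact hu
    exact one_ne_zero (hv12 (-c) 1 this).2
  obtain ⟨f1, hf11, hf1bot⟩ :=
    Submodule.exists_dual_map_eq_bot_of_notMem h1mem inferInstance
  obtain ⟨f2, hf22, hf2bot⟩ :=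
    Submodule.exists_dual_map_eq_bot_of_notMem h2mem inferInstance
  have hf1z : ∀ x ∈ U ⊔ Submodule.span ℂ ({v2} : Set V), f1 x = 0 := by
    intro x hx
    have : f1 x ∈ Submodule.map f1 (U ⊔ Submodule.span ℂ ({v2} : Set V)) :=
      Submodule.mem_map_of_mem hx
    rw [hf1bot] at this
    simpa using this
  have hf2z : ∀ x ∈ U ⊔ Submodule.span ℂ ({v1} : Set V), f2 x = 0 := by
    intro x hx
    have : f2 x ∈ Submodule.map f2 (U ⊔ Submodule.span ℂ ({v1} : Set V)) :=
      Submodule.mem_map_of_mem hx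
    rw [hf2bot] at this
    simpa using this
  have hf1U : ∀ x ∈ U, f1 x = 0 := fun x hx => hf1z x (Submodule.mem_sup_left hx)
  have hf2U : ∀ x ∈ U, f2 x = 0 := fun x hx => hf2z x (Submodule.mem_sup_left hx)
  have hf1v2 : f1 v2 = 0 :=
    hf1z v2 (Submodule.mem_sup_right (Submodule.mem_span_singleton_self v2))
  have hf2v1 : f2 v1 = 0 :=
    hf2z v1 (Submodule.mem_sup_right (Submodule.mem_span_singleton_self v1))
  -- the linear functional on the exterior algebra
  intro hle
  have hx : ι ℂ v0 * ι ℂ v1 * ι ℂ v2 ∈ cube U' :=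
    Submodule.subset_span ⟨v0, hv0U', v1, u1.2, v2, u2.2, rfl⟩
  have hTU0 : ∀ x ∈ TU U, liftAlternating (R := ℂ) (fam (detForm f0 f1 f2)) x = 0 := by
    suffices h : TU U ≤ LinearMap.ker (liftAlternating (R := ℂ) (fam (detForm f0 f1 f2))) by
      exact fun x hx => h hx
    rw [TU, Submodule.span_le]
    rintro x ⟨u, hu, u', hu', v, rfl⟩
    simp only [SetLike.mem_coe, LinearMap.mem_ker]
    rw [lift_triple, detForm_apply, hf1U u hu, hf1U u' hu', hf2U u hu, hf2U u' hu']
    ring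
  have hzero := hTU0 _ (hle hx)
  rw [lift_triple, detForm_apply, hf0v1, hf0v2, hf1v2, hf2v1] at hzero
  have : f0 v0 * (f1 v1 * f2 v2) = 0 := by linear_combination hzero
  exact (mul_ne_zero hf00 (mul_ne_zero hf11 hf22)) this

/-- For 3-dimensional subspaces `U, U'` of the 6-dimensional space `V`,
the line `⋀³U'` is contained in `T_U` if and only if `dim (U ⊓ U') ≥ 2`. -/
theorem statement3 (V : Type*) [AddCommGroup V] [Module ℂ V] [FiniteDimensional ℂ V]
    (h6 : finrank ℂ V = 6)
    (U U' : Submodule ℂ V) (hU : finrank ℂ U = 3) (hU' : finrank ℂ U' = 3) :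
    cube U' ≤ TU U ↔ 2 ≤ finrank ℂ ↥(U ⊓ U') := by
  constructor
  · intro h
    by_contra hlt
    push_neg at hlt
    exact forward U U' hU' hlt h
  · intro h2
    exact backward U U' hU' h2
end
end

section
/- Let U and U' be 3-dimensional subspaces of V. Then T_U ∩ T_{U'} = 0 if and only if U ∩ U' = 0. -/
open ExteriorAlgebra Module

noncomputable section

variable {V : Type*} [AddCommGroup V] [Module ℂ V]

/-- A wedge of three linearly independent vectors is nonzero. -/
theorem wedge3_ne_zero {V : Type*} [AddCommGroup V] [Module ℂ V] {v : Fin 3 → V}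
    (hv : LinearIndependent ℂ v) : ι ℂ (v 0) * ι ℂ (v 1) * ι ℂ (v 2) ≠ 0 := by
  classical
  set W := Submodule.span ℂ (Set.range v) with hW
  let bW : Basis (Fin 3) ℂ W := Basis.span hv
  obtain ⟨W', hW'⟩ := Submodule.exists_isCompl W
  let pr : V →ₗ[ℂ] W := Submodule.linearProjOfIsCompl W W' hW'
  let π : V →ₗ[ℂ] (Fin 3 → ℂ) := (bW.equivFun : W ≃ₗ[ℂ] (Fin 3 → ℂ)).toLinearMap ∘ₗ pr
  let φ : V [⋀^Fin 3]→ₗ[ℂ] ℂ := (Matrix.detRowAlternating).compLinearMap π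
  let f : ∀ i, V [⋀^Fin i]→ₗ[ℂ] ℂ :=
    Function.update (fun i => (0 : V [⋀^Fin i]→ₗ[ℂ] ℂ)) 3 φ
  have hπ : ∀ i : Fin 3, π (v i) = Pi.single i 1 := by
    intro i
    have h1 : v i = ((bW i : W) : V) := congrArg Subtype.val (Basis.span_apply hv i).symm
    have h2 : pr (bW i : V) = bW i := Submodule.linearProjOfIsCompl_apply_left hW' (bW i)
    simp only [π, LinearMap.coe_comp, Function.comp_apply, h1, h2]
    simp [Basis.equivFun_self]
    ext j
    simp [Basis.equivFun_apply, Basis.repr_self, Finsupp.single_apply, Pi.single_apply, eq_comm]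
  have hφ : φ v = 1 := by
    have : (Matrix.of fun i j => π (v i) j) = (1 : Matrix (Fin 3) (Fin 3) ℂ) := by
      ext i j
      rw [Matrix.one_apply]
      simp [hπ i, Pi.single_apply, eq_comm]
    simp only [φ, AlternatingMap.compLinearMap_apply]
    show Matrix.detRowAlternating (fun i => π (v i)) = 1
    rw [show (fun i => π (v i)) = fun i j => π (v i) j from rfl]
    have := congrArg Matrix.det this
    exact this.trans Matrix.det_one
  intro hz
  have hzm : ι ℂ (v 0) * ι ℂ (v 1) * ι ℂ (v 2) = ιMulti ℂ 3 v := by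
    rw [ιMulti_apply]
    simp [List.ofFn_succ, mul_assoc]
  have := congrArg (liftAlternating (R := ℂ) (M := V) (N := ℂ) f) (hzm.symm.trans hz)
  rw [liftAlternating_apply_ιMulti, map_zero] at this
  have hf3 : f 3 = φ := by simp [f]
  rw [hf3, hφ] at this
  exact one_ne_zero this

theorem gen_mem_TU {U : Submodule ℂ V} {a b : V} (ha : a ∈ U) (hb : b ∈ U) (v : V) :
    ι ℂ a * ι ℂ b * ι ℂ v ∈ TU U :=
  Submodule.subset_span ⟨a, ha, b, hb, v, rfl⟩

/-- For 3-dimensional subspaces `U, U'` of the 6-dimensional space `V`,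
`T_U ∩ T_U' = 0` if and only if `U ∩ U' = 0`. -/
theorem statement4 (V : Type*) [AddCommGroup V] [Module ℂ V] [FiniteDimensional ℂ V]
    (h6 : finrank ℂ V = 6)
    (U U' : Submodule ℂ V) (hU : finrank ℂ U = 3) (hU' : finrank ℂ U' = 3) :
    TU U ⊓ TU U' = ⊥ ↔ U ⊓ U' = ⊥ := by
  constructor
  · intro hT
    by_contra hne
    obtain ⟨w, hw, hw0⟩ := (Submodule.ne_bot_iff _).mp hne
    obtain ⟨hwU, hwU'⟩ := hw
    -- find u ∈ U outside span {w}
    have hUle : ¬ U ≤ Submodule.span ℂ {w} := by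
      intro hle
      have := Submodule.finrank_mono (R := ℂ) (M := V) hle
      rw [hU, finrank_span_singleton hw0] at this
      omega
    obtain ⟨u, huU, hu⟩ := SetLike.not_le_iff_exists.mp hUle
    -- find u'' ∈ U' outside span {w, u}
    have hU'le : ¬ U' ≤ Submodule.span ℂ {w, u} := by
      intro hle
      have h2 : finrank ℂ (Submodule.span ℂ ({w, u} : Set V)) ≤ 2 := by
        have hu0 : u ≠ 0 := fun h => hu (h ▸ Submodule.zero_mem _)
        have : Submodule.span ℂ ({w, u} : Set V) =
            Submodule.span ℂ {w} ⊔ Submodule.span ℂ {u} := by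
          rw [← Submodule.span_union, Set.singleton_union]
        rw [this]
        have h3 := Submodule.finrank_sup_add_finrank_inf_eq
          (Submodule.span ℂ ({w} : Set V)) (Submodule.span ℂ ({u} : Set V))
        rw [finrank_span_singleton hw0, finrank_span_singleton hu0] at h3
        omega
      have := Submodule.finrank_mono (R := ℂ) (M := V) hle
      omega
    obtain ⟨u'', hu''U', hu''⟩ := SetLike.not_le_iff_exists.mp hU'le
    -- linear independence of ![w, u, u'']
    have li0 : LinearIndependent ℂ ![u'', u, w] := by
      apply linearIndependent_fin_cons.mpr
      constructor
      · apply linearIndependent_fin_cons.mpr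
        refine ⟨linearIndependent_unique_iff.mpr ?_, ?_⟩
        · simpa using hw0
        · simpa using hu
      · have : Set.range ![u, w] = {u, w} := by
          ext x; simp [Fin.exists_fin_two, or_comm]
        rw [this]
        have : ({u, w} : Set V) = {w, u} := by ext x; simp [or_comm]
        rw [this]
        exact hu''
    have li : LinearIndependent ℂ ![w, u, u''] := by
      have hinj : Function.Injective (![2, 1, 0] : Fin 3 → Fin 3) := by decide
      have hcomp : ![w, u, u''] = ![u'', u, w] ∘ ![2, 1, 0] := by
        funext i; fin_cases i <;> rfl
      rw [hcomp]
      exact li0.comp _ hinj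
    set z := ι ℂ w * ι ℂ u * ι ℂ u'' with hz
    have hz0 : z ≠ 0 := by
      have := wedge3_ne_zero li
      simpa using this
    have hz1 : z ∈ TU U := gen_mem_TU hwU huU u''
    have hz2 : z ∈ TU U' := by
      have hswap : ι ℂ u * ι ℂ u'' = -(ι ℂ u'' * ι ℂ u) :=
        eq_neg_of_add_eq_zero_left (ι_add_mul_swap u u'')
      have : z = -(ι ℂ w * ι ℂ u'' * ι ℂ u) := by
        rw [hz, mul_assoc, hswap, mul_neg, mul_assoc]
      rw [this]
      exact neg_mem (gen_mem_TU hwU' hu''U' u)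
    have : z ∈ TU U ⊓ TU U' := ⟨hz1, hz2⟩
    rw [hT] at this
    exact hz0 (Submodule.mem_bot _ |>.mp this)
  · intro hUU'
    have hdisj : Disjoint U U' := disjoint_iff.mpr hUU'
    have htop : U ⊔ U' = ⊤ := by
      apply Submodule.eq_top_of_finrank_eq
      have h3 := Submodule.finrank_sup_add_finrank_inf_eq U U'
      rw [hUU', hU, hU'] at h3
      rw [h6]
      simpa using h3
    have hcompl : IsCompl U U' := ⟨hdisj, codisjoint_iff.mpr htop⟩
    set pr := Submodule.linearProjOfIsCompl U U' hcompl with hpr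
    set p : V →ₗ[ℂ] V := U.subtype ∘ₗ pr with hp
    have hpU : ∀ u ∈ U, p u = u := by
      intro u hu
      have : pr u = ⟨u, hu⟩ := Submodule.linearProjOfIsCompl_apply_left hcompl ⟨u, hu⟩
      simp [hp, this]
    have hpU' : ∀ w ∈ U', p w = 0 := by
      intro w hw
      have : pr w = 0 := Submodule.projectionOnto_apply_of_mem_right hcompl hw
      simp [hp, this]
    set f : ℂ → (V →ₗ[ℂ] V) := fun t => p + t • (LinearMap.id - p) with hf
    set g : ℂ → (ExteriorAlgebra ℂ V →ₐ[ℂ] ExteriorAlgebra ℂ V) :=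
      fun t => ExteriorAlgebra.map (f t) with hg
    have hfU : ∀ t : ℂ, ∀ u ∈ U, f t u = u := by
      intro t u hu; simp [hf, hpU u hu]
    have hfU' : ∀ t : ℂ, ∀ w ∈ U', f t w = t • w := by
      intro t w hw; simp [hf, hpU' w hw]
    have hfv : ∀ t : ℂ, ∀ v : V, f t v = p v + t • (v - p v) := by
      intro t v; simp [hf]
    have hgen : ∀ (t : ℂ) (a b v : V),
        g t (ι ℂ a * ι ℂ b * ι ℂ v) = ι ℂ (f t a) * ι ℂ (f t b) * ι ℂ (f t v) := by
      intro t a b v; simp [hg]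
    have claimA : ∀ x ∈ TU U, ∀ t : ℂ, g t x = g 0 x + t • (x - g 0 x) := by
      intro x hx
      induction hx using Submodule.span_induction with
      | mem x hxs =>
        obtain ⟨u, hu, u', hu', v, rfl⟩ := hxs
        intro t
        rw [hgen, hgen, hfU t u hu, hfU t u' hu', hfU 0 u hu, hfU 0 u' hu',
          hfv t v, hfv 0 v]
        simp only [zero_smul, add_zero, map_add, map_smul, map_sub]
        simp only [mul_add, mul_sub, Algebra.mul_smul_comm, smul_sub]
      | zero => intro t; simp
      | add x y hx hy ihx ihy =>
        intro t
        simp only [map_add]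
        rw [ihx t, ihy t]
        module
      | smul c x hx ih =>
        intro t
        simp only [map_smul]
        rw [ih t]
        module
    have claimB : ∀ x ∈ TU U', ∀ t : ℂ,
        (2:ℂ) • g t x = (t^2) • (x + g (-1) x) + (t^3) • (x - g (-1) x) := by
      intro x hx
      induction hx using Submodule.span_induction with
      | mem x hxs =>
        obtain ⟨w, hw, w', hw', v, rfl⟩ := hxs
        intro t
        rw [hgen, hgen, hfU' t w hw, hfU' t w' hw', hfU' (-1) w hw, hfU' (-1) w' hw',
          hfv t v, hfv (-1) v]
        simp only [map_add, map_smul, map_sub, map_neg, neg_smul, one_smul]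
        simp only [mul_add, mul_sub, add_mul, sub_mul, Algebra.mul_smul_comm,
          smul_mul_assoc, smul_sub, smul_add, smul_smul, smul_neg, neg_mul, mul_neg, neg_neg]
        module
      | zero => intro t; simp
      | add x y hx hy ihx ihy =>
        intro t
        simp only [map_add]
        have h1 := ihx t; have h2 := ihy t
        rw [smul_add, h1, h2]
        module
      | smul c x hx ih =>
        intro t
        simp only [map_smul]
        have h1 := ih t
        rw [smul_comm, h1]
        module
    have hg1 : ∀ x, g 1 x = x := by
      have hf1 : f 1 = LinearMap.id := by
        ext v; simp [hf]
      intro x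
      rw [hg]
      simp only [hf1, ExteriorAlgebra.map_id]
      rfl
    rw [eq_bot_iff]
    rintro x ⟨hxU, hxU'⟩
    rw [Submodule.mem_bot]
    have h0 : g 0 x = 0 := by
      have := claimB x hxU' 0
      simp at this
      exact this
    have hA2 : g 2 x = (2:ℂ) • x := by
      have := claimA x hxU 2
      rw [h0] at this
      simpa using this
    have hm1 : g (-1) x = -x := by
      have := claimA x hxU (-1)
      rw [h0] at this
      simpa using this
    have hB2 := claimB x hxU' 2
    rw [hm1, hA2] at hB2
    have h12 : (12:ℂ) • x = 0 := by
      have : (4:ℂ) • x = (16:ℂ) • x := by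
        have := hB2
        simp only [smul_smul] at this ⊢
        norm_num at this
        linear_combination (norm := module) this
      linear_combination (norm := module) -this
    have := smul_eq_zero.mp h12
    rcases this with h | h
    · norm_num at h
    · exact h
end
end

section
/- For nonzero vectors v, w ∈ V₄, the subspaces F_v := V₂∧V₄∧v and F_w := V₂∧V₄∧w of V_{2,4} are equal if and only if w is a scalar multiple of v. Consequently, the map [v] ↦ [F_v] from the projective space ℙ(V₄) to the set of Lagrangian subspaces of (V_{2,4}, η_{2,4}) is injective. -/
open ExteriorAlgebra Module

noncomputable section

variable {V : Type*} [AddCommGroup V] [Module ℂ V]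

/-- `F_v = V₂ ∧ V₄ ∧ v`: the subspace spanned by all `x ∧ w ∧ v` with `x ∈ V₂`, `w ∈ V₄`. -/
def Fv24 (V₂ V₄ : Submodule ℂ V) (v : V) : Submodule ℂ (ExteriorAlgebra ℂ V) :=
  Submodule.span ℂ {y | ∃ x ∈ V₂, ∃ w ∈ V₄, y = ι ℂ x * ι ℂ w * ι ℂ v}

open Set Submodule
theorem Fv24_smul (V₂ V₄ : Submodule ℂ V) (v : V) (c : ℂ) (hc : c ≠ 0) :
    Fv24 V₂ V₄ (c • v) = Fv24 V₂ V₄ v := by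
  apply le_antisymm
  · rw [Fv24, Submodule.span_le]
    rintro y ⟨x, hx, u, hu, rfl⟩
    have : ι ℂ x * ι ℂ u * ι ℂ (c • v) = c • (ι ℂ x * ι ℂ u * ι ℂ v) := by
      rw [map_smul, mul_smul_comm]
    rw [this]
    exact Submodule.smul_mem _ c (Submodule.subset_span ⟨x, hx, u, hu, rfl⟩)
  · rw [Fv24, Submodule.span_le]
    rintro y ⟨x, hx, u, hu, rfl⟩
    have : ι ℂ x * ι ℂ u * ι ℂ v = c⁻¹ • (ι ℂ x * ι ℂ u * ι ℂ (c • v)) := by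
      rw [map_smul, mul_smul_comm, smul_smul, inv_mul_cancel₀ hc, one_smul]
    rw [this]
    exact Submodule.smul_mem _ _ (Submodule.subset_span ⟨x, hx, u, hu, rfl⟩)

theorem Fv24_ne_of_indep (V : Type*) [AddCommGroup V] [Module ℂ V] [FiniteDimensional ℂ V]
    (h6 : finrank ℂ V = 6)
    (V₂ V₄ : Submodule ℂ V) (hV₂ : finrank ℂ V₂ = 2) (hV₄ : finrank ℂ V₄ = 4)
    (hcompl : IsCompl V₂ V₄)
    (v w : V) (hvV₄ : v ∈ V₄) (hwV₄ : w ∈ V₄) (hv : v ≠ 0) (hw : w ≠ 0)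
    (hnot : ∀ c : ℂ, w ≠ c • v) (heq : Fv24 V₂ V₄ v = Fv24 V₂ V₄ w) : False := by
  classical
  -- {v, w} linearly independent
  have hvw : LinearIndepOn ℂ id ({v, w} : Set V) :=
    linearIndepOn_id_pair hv (fun a ha => hnot a ha.symm)
  -- pick x₁ ∈ V₂ nonzero
  have hV₂ne : V₂ ≠ ⊥ := by
    intro hb; rw [hb] at hV₂; simp [finrank_bot] at hV₂
  obtain ⟨x₁, hx₁, hx₁0⟩ := Submodule.exists_mem_ne_zero_of_ne_bot hV₂ne
  -- x₁ ∉ V₄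
  have hx₁V₄ : x₁ ∉ V₄ := by
    intro hmem
    exact hx₁0 ((Submodule.disjoint_def.1 hcompl.disjoint) x₁ hx₁ hmem)
  -- pick u₃ ∈ V₄ not in span {v, w}
  have hspanle : span ℂ ({v, w} : Set V) ≤ V₄ := by
    rw [span_le]; rintro y (rfl | rfl) <;> assumption
  have hne : ¬(V₄ ≤ span ℂ ({v, w} : Set V)) := by
    intro hle
    have h1 : finrank ℂ (span ℂ ({v, w} : Set V)) ≤ 2 := by
      have := finrank_span_le_card (R := ℂ) ({v, w} : Set V)
      refine this.trans ?_
      simp [Set.toFinset_insert]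
      exact Finset.card_insert_le _ _ |>.trans (by simp)
    have h2 : (4 : ℕ) ≤ finrank ℂ (span ℂ ({v, w} : Set V)) := hV₄ ▸ Submodule.finrank_mono hle
    omega
  obtain ⟨u₃, hu₃V₄, hu₃span⟩ := SetLike.not_le_iff_exists.1 hne
  -- linear independence of s = {x₁, u₃, v, w}
  have hs₃ : LinearIndepOn ℂ id (insert u₃ {v, w} : Set V) :=
    hvw.id_insert hu₃span
  have hx₁span : x₁ ∉ span ℂ (insert u₃ {v, w} : Set V) := by
    intro hmem
    apply hx₁V₄
    refine Submodule.span_le.2 ?_ hmem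
    rintro y (rfl | rfl | rfl) <;> assumption
  set s : Set V := insert x₁ (insert u₃ {v, w}) with hs_def
  have hs : LinearIndepOn ℂ id s := hs₃.id_insert hx₁span
  -- distinctness
  have hwx₁ : w ≠ x₁ := fun h => hx₁V₄ (h ▸ hwV₄)
  have hvx₁ : v ≠ x₁ := fun h => hx₁V₄ (h ▸ hvV₄)
  have hu₃x₁ : u₃ ≠ x₁ := fun h => hx₁V₄ (h ▸ hu₃V₄)
  have hwu₃ : w ≠ u₃ := fun h => hu₃span (h ▸ subset_span (by simp))
  have hvu₃ : v ≠ u₃ := fun h => hu₃span (h ▸ subset_span (by simp))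
  have hwv : w ≠ v := fun h => hnot 1 (by rw [one_smul]; exact h)
  -- basis extension and coordinates
  set B := Module.Basis.extend hs with hB
  have hsub : s ⊆ hs.extend (Set.subset_univ s) := hs.subset_extend _
  have coord_eval : ∀ (a b : V) (ha : a ∈ hs.extend (Set.subset_univ s))
      (hb : b ∈ hs.extend (Set.subset_univ s)),
      B.coord ⟨a, ha⟩ b = if b = a then 1 else 0 := by
    intro a b ha hb
    have hb' : b = B ⟨b, hb⟩ := (Basis.extend_apply_self hs ⟨b, hb⟩).symm
    rw [Basis.coord_apply, hb', Basis.repr_self_apply]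
    rw [show B ⟨b, hb⟩ = b from Basis.extend_apply_self hs ⟨b, hb⟩]
    simp [Subtype.ext_iff, eq_comm]
  have hx₁s : x₁ ∈ hs.extend (Set.subset_univ s) := hsub (by simp [hs_def])
  have hu₃s : u₃ ∈ hs.extend (Set.subset_univ s) := hsub (by simp [hs_def])
  have hvs : v ∈ hs.extend (Set.subset_univ s) := hsub (by simp [hs_def])
  have hws : w ∈ hs.extend (Set.subset_univ s) := hsub (by simp [hs_def])
  set εx := B.coord ⟨x₁, hx₁s⟩ with hεx
  set εu := B.coord ⟨u₃, hu₃s⟩ with hεu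
  set εv := B.coord ⟨v, hvs⟩ with hεv
  have ex_w : εx w = 0 := by rw [hεx, coord_eval _ _ _ hws, if_neg hwx₁]
  have eu_w : εu w = 0 := by rw [hεu, coord_eval _ _ _ hws, if_neg hwu₃]
  have ev_w : εv w = 0 := by rw [hεv, coord_eval _ _ _ hws, if_neg hwv]
  have ex_x : εx x₁ = 1 := by rw [hεx, coord_eval _ _ _ hx₁s, if_pos rfl]
  have eu_x : εu x₁ = 0 := by rw [hεu, coord_eval _ _ _ hx₁s, if_neg (Ne.symm hu₃x₁)]
  have ev_x : εv x₁ = 0 := by rw [hεv, coord_eval _ _ _ hx₁s, if_neg (Ne.symm hvx₁)]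
  have eu_u : εu u₃ = 1 := by rw [hεu, coord_eval _ _ _ hu₃s, if_pos rfl]
  have ex_u : εx u₃ = 0 := by rw [hεx, coord_eval _ _ _ hu₃s, if_neg hu₃x₁]
  have ev_u : εv u₃ = 0 := by rw [hεv, coord_eval _ _ _ hu₃s, if_neg (Ne.symm hvu₃)]
  have ev_v : εv v = 1 := by rw [hεv, coord_eval _ _ _ hvs, if_pos rfl]
  have ex_v : εx v = 0 := by rw [hεx, coord_eval _ _ _ hvs, if_neg hvx₁]
  have eu_v : εu v = 0 := by rw [hεu, coord_eval _ _ _ hvs, if_neg hvu₃]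
  -- the alternating functional
  set fs : Fin 3 → (V →ₗ[ℂ] ℂ) := ![εx, εu, εv] with hfs
  set φ : V [⋀^Fin 3]→ₗ[ℂ] ℂ :=
    (Basis.det (Pi.basisFun ℂ (Fin 3))).compLinearMap (LinearMap.pi fs) with hφ
  have φ_apply : ∀ a b c : V,
      φ ![a, b, c] = (εx a * εu b * εv c - εx a * εv b * εu c - εu a * εx b * εv c
        + εu a * εv b * εx c + εv a * εx b * εu c - εv a * εu b * εx c) := by
    intro a b c
    rw [hφ, AlternatingMap.compLinearMap_apply, Basis.det_apply, Matrix.det_fin_three]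
    simp [Basis.toMatrix_apply, Pi.basisFun_repr, LinearMap.pi_apply, hfs,
      Fin.isValue, Matrix.cons_val_zero, Matrix.cons_val_one]
    ring
  set F : ∀ i : ℕ, V [⋀^Fin i]→ₗ[ℂ] ℂ :=
    Function.update (fun i => (0 : V [⋀^Fin i]→ₗ[ℂ] ℂ)) 3 φ with hF
  set L : ExteriorAlgebra ℂ V →ₗ[ℂ] ℂ := liftAlternating F with hL
  have hL3 : ∀ a b c : V, L (ι ℂ a * ι ℂ b * ι ℂ c) = φ ![a, b, c] := by
    intro a b c
    have htriple : ι ℂ a * ι ℂ b * ι ℂ c = ιMulti ℂ 3 ![a, b, c] := by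
      rw [ιMulti_apply]
      simp [List.ofFn_succ, mul_assoc]
    rw [htriple, hL, liftAlternating_apply_ιMulti, hF, Function.update_self]
  -- L vanishes on Fv24 w
  have hLw : Fv24 V₂ V₄ w ≤ LinearMap.ker L := by
    rw [Fv24, Submodule.span_le]
    rintro y ⟨x, hxm, u, hum, rfl⟩
    rw [SetLike.mem_coe, LinearMap.mem_ker, hL3, φ_apply, ex_w, eu_w, ev_w]
    ring
  -- but L (x₁ ∧ u₃ ∧ v) = 1
  have hmem : ι ℂ x₁ * ι ℂ u₃ * ι ℂ v ∈ Fv24 V₂ V₄ v :=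
    Submodule.subset_span ⟨x₁, hx₁, u₃, hu₃V₄, rfl⟩
  rw [heq] at hmem
  have h0 : L (ι ℂ x₁ * ι ℂ u₃ * ι ℂ v) = 0 := hLw hmem
  rw [hL3, φ_apply, ex_x, eu_u, ev_v, ex_u, ex_v, eu_x, eu_v, ev_x, ev_u] at h0
  norm_num at h0

/-- Let `V = V₂ ⊕ V₄` with `dim V₂ = 2`, `dim V₄ = 4`. For nonzero
`v, w ∈ V₄`, the subspaces `F_v` and `F_w` of `V_{2,4}` are equal if and only if `w` is a
scalar multiple of `v`; consequently `[v] ↦ [F_v]` is injective on `ℙ(V₄)`. -/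
theorem statement11 (V : Type*) [AddCommGroup V] [Module ℂ V] [FiniteDimensional ℂ V]
    (h6 : finrank ℂ V = 6)
    (V₂ V₄ : Submodule ℂ V) (hV₂ : finrank ℂ V₂ = 2) (hV₄ : finrank ℂ V₄ = 4)
    (hcompl : IsCompl V₂ V₄)
    (v w : V) (hvV₄ : v ∈ V₄) (hwV₄ : w ∈ V₄) (hv : v ≠ 0) (hw : w ≠ 0) :
    Fv24 V₂ V₄ v = Fv24 V₂ V₄ w ↔ ∃ c : ℂ, w = c • v := by
  constructor
  · intro h
    by_contra hnot
    push_neg at hnot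
    exact Fv24_ne_of_indep V h6 V₂ V₄ hV₂ hV₄ hcompl v w hvV₄ hwV₄ hv hw hnot h
  · rintro ⟨c, rfl⟩
    have hc : c ≠ 0 := by rintro rfl; simp at hw
    exact (Fv24_smul V₂ V₄ v c hc).symm
end
end

section
/- Let V₂, V₃ be complex subspaces of a vector space V with dim V₂ = 2, dim V₃ = 3, and let v₀ ∈ V be such that V = V₂ ⊕ ℂv₀ ⊕ V₃. Let α be an element of the subspace of ⋀²V spanned by all x∧y with x ∈ V₂, y ∈ V₃, let β be an element of the subspace of ⋀³V spanned by all x∧y∧z with x ∈ V₂, y,z ∈ V₃, and let v ∈ V₃ and λ ∈ ℂ. Then (v₀∧α + β)∧(v + λv₀) = 0 in ⋀⁴V if and only if β∧v = 0 and α∧v = λβ. -/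
open ExteriorAlgebra Module

noncomputable section

set_option maxHeartbeats 1000000 in
/-- Let `V = V₂ ⊕ ℂv₀ ⊕ V₃` with `dim V₂ = 2`, `dim V₃ = 3`. For
`α ∈ V₂∧V₃ ⊆ ⋀²V`, `β ∈ V₂∧⋀²V₃ ⊆ ⋀³V`, `v ∈ V₃` and `λ ∈ ℂ`, one has
`(v₀∧α + β)∧(v + λv₀) = 0` in `⋀⁴V` if and only if `β∧v = 0` and `α∧v = λβ`. -/
theorem statement12 (V : Type*) [AddCommGroup V] [Module ℂ V] [FiniteDimensional ℂ V]
    (V₂ V₃ : Submodule ℂ V) (hV₂ : finrank ℂ V₂ = 2) (hV₃ : finrank ℂ V₃ = 3)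
    (v₀ : V) (hv₀ : v₀ ≠ 0)
    (hV : finrank ℂ V = 6)
    (hspan : V₂ ⊔ (ℂ ∙ v₀) ⊔ V₃ = ⊤)
    (α β : ExteriorAlgebra ℂ V)
    (hα : α ∈ Submodule.span ℂ
      {x : ExteriorAlgebra ℂ V | ∃ a ∈ V₂, ∃ b ∈ V₃, x = ι ℂ a * ι ℂ b})
    (hβ : β ∈ Submodule.span ℂ
      {x : ExteriorAlgebra ℂ V | ∃ a ∈ V₂, ∃ b ∈ V₃, ∃ c ∈ V₃, x = ι ℂ a * ι ℂ b * ι ℂ c})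
    (v : V) (hv : v ∈ V₃) (lam : ℂ) :
    (ι ℂ v₀ * α + β) * ι ℂ (v + lam • v₀) = 0 ↔
      (β * ι ℂ v = 0 ∧ α * ι ℂ v = lam • β) := by
  classical
  -- v₀ is not in V₂ ⊔ V₃
  have hv₀W : v₀ ∉ V₂ ⊔ V₃ := by
    intro h
    have htop : V₂ ⊔ V₃ = ⊤ := by
      refine le_antisymm le_top ?_
      rw [← hspan]
      refine sup_le (sup_le le_sup_left ?_) le_sup_right
      rw [Submodule.span_singleton_le_iff_mem]; exact h
    have h5 : finrank ℂ ↥(V₂ ⊔ V₃) ≤ 5 := by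
      have := Submodule.finrank_add_le_finrank_add_finrank V₂ V₃
      omega
    rw [htop, finrank_top, hV] at h5
    omega
  -- a dual functional φ with φ v₀ = 1 and φ = 0 on V₂ and V₃
  set W : Submodule ℂ V := V₂ ⊔ V₃ with hWdef
  have hq : W.mkQ v₀ ≠ 0 := by
    simpa [Submodule.mkQ_apply, Submodule.Quotient.mk_eq_zero] using hv₀W
  obtain ⟨ψ, hψ⟩ : ∃ ψ : Module.Dual ℂ (V ⧸ W), ψ (W.mkQ v₀) ≠ 0 := by
    by_contra hc
    push_neg at hc
    exact hq ((Module.forall_dual_apply_eq_zero_iff ℂ _).mp hc)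
  set φ : Module.Dual ℂ V := (ψ (W.mkQ v₀))⁻¹ • (ψ.comp W.mkQ) with hφdef
  have hφv₀ : φ v₀ = 1 := by
    rw [hφdef]
    simp only [LinearMap.smul_apply, LinearMap.coe_comp, Function.comp_apply, smul_eq_mul]
    exact inv_mul_cancel₀ hψ
  have hφW : ∀ x ∈ W, φ x = 0 := by
    intro x hx
    have : W.mkQ x = 0 := by
      simpa [Submodule.mkQ_apply, Submodule.Quotient.mk_eq_zero] using hx
    simp [hφdef, this]
  have hφ2 : ∀ x ∈ V₂, φ x = 0 := fun x hx => hφW x (Submodule.mem_sup_left hx)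
  have hφ3 : ∀ x ∈ V₃, φ x = 0 := fun x hx => hφW x (Submodule.mem_sup_right hx)
  -- the contraction operator
  set D : ExteriorAlgebra ℂ V →ₗ[ℂ] ExteriorAlgebra ℂ V :=
    CliffordAlgebra.contractLeft (Q := (0 : QuadraticForm ℂ V)) φ with hDdef
  have hDιmul : ∀ (a : V) (x : ExteriorAlgebra ℂ V),
      D (ι ℂ a * x) = φ a • x - ι ℂ a * D x := fun a x =>
    CliffordAlgebra.contractLeft_ι_mul (Q := (0 : QuadraticForm ℂ V)) φ a x
  have hDι : ∀ a : V, D (ι ℂ a) = algebraMap ℂ _ (φ a) := fun a =>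
    CliffordAlgebra.contractLeft_ι (0 : QuadraticForm ℂ V) φ a
  have hgen3 : ∀ a ∈ V₂, ∀ b ∈ V₃, ∀ c ∈ V₃, D (ι ℂ a * ι ℂ b * ι ℂ c) = 0 := by
    intro a ha b hb c hc
    rw [mul_assoc, hDιmul, hφ2 a ha, hDιmul, hφ3 b hb, hDι, hφ3 c hc]
    simp
  have hgen4 : ∀ a ∈ V₂, ∀ b ∈ V₃, ∀ c ∈ V₃, ∀ d ∈ V₃,
      D (ι ℂ a * ι ℂ b * ι ℂ c * ι ℂ d) = 0 := by
    intro a ha b hb c hc d hd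
    rw [mul_assoc, mul_assoc, hDιmul, hφ2 a ha, hDιmul, hφ3 b hb, hDιmul, hφ3 c hc,
      hDι, hφ3 d hd]
    simp
  -- anticommutation helpers
  have hsw : ∀ x y : V, ι ℂ x * ι ℂ y = -(ι ℂ y * ι ℂ x) := fun x y =>
    eq_neg_of_add_eq_zero_left (ι_add_mul_swap x y)
  have mov2 : ∀ x y w : V, (ι ℂ x * ι ℂ y) * ι ℂ w = ι ℂ w * (ι ℂ x * ι ℂ y) := by
    intro x y w
    rw [mul_assoc, hsw y w, mul_neg, ← mul_assoc, hsw x w, neg_mul, neg_neg, mul_assoc]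
  have mov3 : ∀ x y z w : V,
      (ι ℂ x * ι ℂ y * ι ℂ z) * ι ℂ w = -(ι ℂ w * (ι ℂ x * ι ℂ y * ι ℂ z)) := by
    intro x y z w
    rw [mul_assoc (ι ℂ x * ι ℂ y), hsw z w, mul_neg, ← mul_assoc, mov2,
      mul_assoc (ι ℂ w)]
  -- key algebraic facts by span induction
  have hαv₀' : ∀ x ∈ Submodule.span ℂ
      {x : ExteriorAlgebra ℂ V | ∃ a ∈ V₂, ∃ b ∈ V₃, x = ι ℂ a * ι ℂ b},
      ι ℂ v₀ * x * ι ℂ v₀ = 0 := by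
    intro x hx
    induction hx using Submodule.span_induction with
    | mem x hx =>
      obtain ⟨a, ha, b, hb, rfl⟩ := hx
      rw [mul_assoc, mov2, ← mul_assoc, ← mul_assoc, ι_sq_zero, zero_mul, zero_mul]
    | zero => simp
    | add x y hx hy ihx ihy => rw [mul_add, add_mul, ihx, ihy, add_zero]
    | smul c x hx ihx => rw [mul_smul_comm, smul_mul_assoc, ihx, smul_zero]
  have hαv₀ : ι ℂ v₀ * α * ι ℂ v₀ = 0 := hαv₀' α hα
  have hβv₀' : ∀ x ∈ Submodule.span ℂ
      {x : ExteriorAlgebra ℂ V | ∃ a ∈ V₂, ∃ b ∈ V₃, ∃ c ∈ V₃, x = ι ℂ a * ι ℂ b * ι ℂ c},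
      x * ι ℂ v₀ = -(ι ℂ v₀ * x) := by
    intro x hx
    induction hx using Submodule.span_induction with
    | mem x hx =>
      obtain ⟨a, ha, b, hb, c, hc, rfl⟩ := hx
      exact mov3 a b c v₀
    | zero => simp
    | add x y hx hy ihx ihy => rw [add_mul, ihx, ihy, mul_add, neg_add]
    | smul r x hx ihx => rw [smul_mul_assoc, ihx, mul_smul_comm, smul_neg]
  have hβv₀ : β * ι ℂ v₀ = -(ι ℂ v₀ * β) := hβv₀' β hβ
  have hDβ' : ∀ x ∈ Submodule.span ℂ
      {x : ExteriorAlgebra ℂ V | ∃ a ∈ V₂, ∃ b ∈ V₃, ∃ c ∈ V₃, x = ι ℂ a * ι ℂ b * ι ℂ c},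
      D x = 0 := by
    intro x hx
    induction hx using Submodule.span_induction with
    | mem x hx =>
      obtain ⟨a, ha, b, hb, c, hc, rfl⟩ := hx
      exact hgen3 a ha b hb c hc
    | zero => simp
    | add x y hx hy ihx ihy => rw [map_add, ihx, ihy, add_zero]
    | smul r x hx ihx => rw [map_smul, ihx, smul_zero]
  have hDβ : D β = 0 := hDβ' β hβ
  have hDαv' : ∀ x ∈ Submodule.span ℂ
      {x : ExteriorAlgebra ℂ V | ∃ a ∈ V₂, ∃ b ∈ V₃, x = ι ℂ a * ι ℂ b},
      D (x * ι ℂ v) = 0 := by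
    intro x hx
    induction hx using Submodule.span_induction with
    | mem x hx =>
      obtain ⟨a, ha, b, hb, rfl⟩ := hx
      exact hgen3 a ha b hb v hv
    | zero => simp
    | add x y hx hy ihx ihy => rw [add_mul, map_add, ihx, ihy, add_zero]
    | smul r x hx ihx => rw [smul_mul_assoc, map_smul, ihx, smul_zero]
  have hDαv : D (α * ι ℂ v) = 0 := hDαv' α hα
  have hDβv' : ∀ x ∈ Submodule.span ℂ
      {x : ExteriorAlgebra ℂ V | ∃ a ∈ V₂, ∃ b ∈ V₃, ∃ c ∈ V₃, x = ι ℂ a * ι ℂ b * ι ℂ c},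
      D (x * ι ℂ v) = 0 := by
    intro x hx
    induction hx using Submodule.span_induction with
    | mem x hx =>
      obtain ⟨a, ha, b, hb, c, hc, rfl⟩ := hx
      exact hgen4 a ha b hb c hc v hv
    | zero => simp
    | add x y hx hy ihx ihy => rw [add_mul, map_add, ihx, ihy, add_zero]
    | smul r x hx ihx => rw [smul_mul_assoc, map_smul, ihx, smul_zero]
  have hDβv : D (β * ι ℂ v) = 0 := hDβv' β hβ
  -- rewrite the left hand side
  have key : (ι ℂ v₀ * α + β) * ι ℂ (v + lam • v₀)
      = ι ℂ v₀ * (α * ι ℂ v - lam • β) + β * ι ℂ v := by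
    rw [map_add, map_smul, add_mul, mul_add, mul_add, mul_smul_comm, mul_smul_comm,
      hαv₀, smul_zero, add_zero, hβv₀, smul_neg, mul_sub, mul_smul_comm, ← mul_assoc]
    abel
  rw [key]
  constructor
  · intro h
    have hX : α * ι ℂ v - lam • β = 0 := by
      have hD0 : D (ι ℂ v₀ * (α * ι ℂ v - lam • β) + β * ι ℂ v) = 0 := by
        rw [h, map_zero]
      rw [map_add, hDβv, add_zero, hDιmul, hφv₀, one_smul, map_sub, map_smul,
        hDαv, hDβ, smul_zero, sub_zero, mul_zero, sub_zero] at hD0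
      exact hD0
    have hY : β * ι ℂ v = 0 := by
      rw [hX, mul_zero, zero_add] at h
      exact h
    exact ⟨hY, by rwa [sub_eq_zero] at hX⟩
  · rintro ⟨h1, h2⟩
    rw [h1, h2, sub_self, mul_zero, add_zero]
end
end

section
/- Set β₁ = u₁∧v₁∧v₂, β₂ = u₂∧v₁∧v₃, β₃ = (u₁+u₂)∧v₁∧(v₂+v₃) in ⋀³V. Let α₁, α₂, α₃ be elements of ⋀²U₁∧U₂ such that (αᵢ+βᵢ)∧(αⱼ+βⱼ) = 0 in ⋀⁶V for all i,j ∈ {1,2,3}, and suppose there exists a complex number c such that vol(αᵢ∧βᵢ) = 0 for each i and vol(αᵢ∧βⱼ) = −c for all i ≠ j. Then the space of triples (λ₁,λ₂,λ₃) ∈ ℂ³ such that ω := λ₁(α₁+β₁) + λ₂(α₂+β₂) + λ₃(α₃+β₃) satisfies ω∧u₁∧u₂ = 0, ω∧u₁∧(v₁ + c·u₃) = 0 and ω∧u₂∧(v₁ + c·u₃) = 0 in ⋀⁵V is a linear subspace of ℂ³ of dimension at least 2. -/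
open ExteriorAlgebra Module

noncomputable section

variable {V : Type*} [AddCommGroup V] [Module ℂ V]

/-- `⋀²U₁ ∧ U₂`: the subspace of `⋀³V` spanned by all `a ∧ b ∧ c` with `a, b ∈ U₁`,
`c ∈ U₂`. -/
def wedge21 (U₁ U₂ : Submodule ℂ V) : Submodule ℂ (ExteriorAlgebra ℂ V) :=
  Submodule.span ℂ {x | ∃ a ∈ U₁, ∃ b ∈ U₁, ∃ c ∈ U₂, x = ι ℂ a * ι ℂ b * ι ℂ c}

open ExteriorAlgebra Module
lemma sw (x y : V) : ι ℂ y * ι ℂ x = -(ι ℂ x * ι ℂ y) :=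
  eq_neg_of_add_eq_zero_left (by rw [add_comm]; exact ι_add_mul_swap x y)

lemma sw' (x y : V) (z : ExteriorAlgebra ℂ V) :
    ι ℂ y * (ι ℂ x * z) = -(ι ℂ x * (ι ℂ y * z)) := by
  rw [← mul_assoc, sw, neg_mul, mul_assoc]

lemma sq' (x : V) (z : ExteriorAlgebra ℂ V) : ι ℂ x * (ι ℂ x * z) = 0 := by
  rw [← mul_assoc, ι_sq_zero, zero_mul]

lemma mem_span_triple' {a b c x : V} (h : x ∈ Submodule.span ℂ ({a, b, c} : Set V)) :
    ∃ p q r : ℂ, x = p • a + q • b + r • c := by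
  rw [Submodule.mem_span_insert] at h
  obtain ⟨p, z, hz, rfl⟩ := h
  rw [Submodule.mem_span_pair] at hz
  obtain ⟨q, r, rfl⟩ := hz
  exact ⟨p, q, r, by rw [add_assoc]⟩

lemma quadU {u₁ u₂ u₃ : V} {a b d e : V}
    (ha : a ∈ Submodule.span ℂ ({u₁, u₂, u₃} : Set V))
    (hb : b ∈ Submodule.span ℂ ({u₁, u₂, u₃} : Set V))
    (hd : d ∈ Submodule.span ℂ ({u₁, u₂, u₃} : Set V))
    (he : e ∈ Submodule.span ℂ ({u₁, u₂, u₃} : Set V))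
    (z : ExteriorAlgebra ℂ V) :
    ι ℂ a * (ι ℂ b * (ι ℂ d * (ι ℂ e * z))) = 0 := by
  obtain ⟨p₁, p₂, p₃, rfl⟩ := mem_span_triple' ha
  obtain ⟨q₁, q₂, q₃, rfl⟩ := mem_span_triple' hb
  obtain ⟨r₁, r₂, r₃, rfl⟩ := mem_span_triple' hd
  obtain ⟨s₁, s₂, s₃, rfl⟩ := mem_span_triple' he
  simp only [map_add, map_smul, add_mul, mul_add, smul_mul_assoc, mul_smul_comm, smul_smul,
    sw' u₁ u₂, sw' u₁ u₃, sw' u₂ u₃, sq', mul_neg, neg_mul, smul_neg, neg_neg,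
    mul_zero, zero_mul, smul_zero, add_zero, zero_add, neg_zero]

lemma keyU {u₁ u₂ u₃ v₁ v₂ v₃ : V} {x : ExteriorAlgebra ℂ V}
    (hx : x ∈ wedge21 (Submodule.span ℂ ({u₁, u₂, u₃} : Set V))
      (Submodule.span ℂ ({v₁, v₂, v₃} : Set V)))
    {w w' : V} (hw : w ∈ Submodule.span ℂ ({u₁, u₂, u₃} : Set V))
    (hw' : w' ∈ Submodule.span ℂ ({u₁, u₂, u₃} : Set V)) :
    x * (ι ℂ w * ι ℂ w') = 0 := by
  have hle : wedge21 (Submodule.span ℂ ({u₁, u₂, u₃} : Set V))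
      (Submodule.span ℂ ({v₁, v₂, v₃} : Set V)) ≤
      LinearMap.ker (LinearMap.mulRight ℂ (ι ℂ w * ι ℂ w')) := by
    rw [wedge21]
    refine Submodule.span_le.2 ?_
    rintro _ ⟨a, ha, b, hb, cc, hcc, rfl⟩
    simp only [SetLike.mem_coe, LinearMap.mem_ker, LinearMap.mulRight_apply]
    rw [mul_assoc, mul_assoc, sw' w cc, sw w' cc]
    simp only [mul_neg, neg_neg, neg_eq_zero]
    exact quadU ha hb hw hw' (ι ℂ cc)
  have := hle hx
  rwa [LinearMap.mem_ker, LinearMap.mulRight_apply] at this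

lemma keyC {u₁ u₂ u₃ v₁ v₂ v₃ : V} (vol : ExteriorAlgebra ℂ V →ₗ[ℂ] ℂ)
    (hvol : vol (ι ℂ u₁ * ι ℂ u₂ * ι ℂ u₃ * ι ℂ v₁ * ι ℂ v₂ * ι ℂ v₃) = 1)
    {x : ExteriorAlgebra ℂ V}
    (hx : x ∈ wedge21 (Submodule.span ℂ ({u₁, u₂, u₃} : Set V))
      (Submodule.span ℂ ({v₁, v₂, v₃} : Set V))) :
    x * (ι ℂ u₁ * ι ℂ v₁) =
      vol (x * (ι ℂ u₁ * ι ℂ v₁ * ι ℂ v₃)) •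
        (ι ℂ u₁ * (ι ℂ u₂ * (ι ℂ u₃ * (ι ℂ v₁ * ι ℂ v₂)))) -
      vol (x * (ι ℂ u₁ * ι ℂ v₁ * ι ℂ v₂)) •
        (ι ℂ u₁ * (ι ℂ u₂ * (ι ℂ u₃ * (ι ℂ v₁ * ι ℂ v₃)))) := by
  simp only [mul_assoc] at hvol
  have hle : wedge21 (Submodule.span ℂ ({u₁, u₂, u₃} : Set V))
      (Submodule.span ℂ ({v₁, v₂, v₃} : Set V)) ≤
      LinearMap.ker (LinearMap.mulRight ℂ (ι ℂ u₁ * ι ℂ v₁) -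
        ((vol.comp (LinearMap.mulRight ℂ (ι ℂ u₁ * ι ℂ v₁ * ι ℂ v₃))).smulRight
          (ι ℂ u₁ * (ι ℂ u₂ * (ι ℂ u₃ * (ι ℂ v₁ * ι ℂ v₂)))) -
         (vol.comp (LinearMap.mulRight ℂ (ι ℂ u₁ * ι ℂ v₁ * ι ℂ v₂))).smulRight
          (ι ℂ u₁ * (ι ℂ u₂ * (ι ℂ u₃ * (ι ℂ v₁ * ι ℂ v₃)))))) := by
    rw [wedge21]
    refine Submodule.span_le.2 ?_
    rintro _ ⟨a, ha, b, hb, cc, hcc, rfl⟩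
    obtain ⟨p₁, p₂, p₃, rfl⟩ := mem_span_triple' ha
    obtain ⟨q₁, q₂, q₃, rfl⟩ := mem_span_triple' hb
    obtain ⟨r₁, r₂, r₃, rfl⟩ := mem_span_triple' hcc
    simp only [SetLike.mem_coe, LinearMap.mem_ker, LinearMap.sub_apply,
      LinearMap.mulRight_apply, LinearMap.smulRight_apply, LinearMap.comp_apply]
    simp only [map_add, map_smul, add_mul, mul_add, smul_mul_assoc, mul_smul_comm, smul_smul,
      mul_assoc, sw' u₁ u₂, sw' u₁ u₃, sw' u₁ v₁, sw' u₁ v₂, sw' u₁ v₃, sw' u₂ u₃, sw' u₂ v₁,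
      sw' u₂ v₂, sw' u₂ v₃, sw' u₃ v₁, sw' u₃ v₂, sw' u₃ v₃, sw' v₁ v₂, sw' v₁ v₃, sw' v₂ v₃,
      sw u₁ u₂, sw u₁ u₃, sw u₁ v₁, sw u₁ v₂, sw u₁ v₃, sw u₂ u₃, sw u₂ v₁,
      sw u₂ v₂, sw u₂ v₃, sw u₃ v₁, sw u₃ v₂, sw u₃ v₃, sw v₁ v₂, sw v₁ v₃, sw v₂ v₃,
      sq', ι_sq_zero, mul_neg, neg_mul, smul_neg, neg_neg,
      mul_zero, zero_mul, smul_zero, add_zero, zero_add, neg_zero, hvol, smul_eq_mul,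
      map_neg, map_zero, mul_one]
    module
  have h0 := hle hx
  simp only [LinearMap.mem_ker, LinearMap.sub_apply, LinearMap.mulRight_apply,
    LinearMap.smulRight_apply, LinearMap.comp_apply] at h0
  exact sub_eq_zero.mp h0

lemma keyD {u₁ u₂ u₃ v₁ v₂ v₃ : V} (vol : ExteriorAlgebra ℂ V →ₗ[ℂ] ℂ)
    (hvol : vol (ι ℂ u₁ * ι ℂ u₂ * ι ℂ u₃ * ι ℂ v₁ * ι ℂ v₂ * ι ℂ v₃) = 1)
    {x : ExteriorAlgebra ℂ V}
    (hx : x ∈ wedge21 (Submodule.span ℂ ({u₁, u₂, u₃} : Set V))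
      (Submodule.span ℂ ({v₁, v₂, v₃} : Set V))) :
    x * (ι ℂ u₂ * ι ℂ v₁) =
      vol (x * (ι ℂ u₂ * ι ℂ v₁ * ι ℂ v₃)) •
        (ι ℂ u₁ * (ι ℂ u₂ * (ι ℂ u₃ * (ι ℂ v₁ * ι ℂ v₂)))) -
      vol (x * (ι ℂ u₂ * ι ℂ v₁ * ι ℂ v₂)) •
        (ι ℂ u₁ * (ι ℂ u₂ * (ι ℂ u₃ * (ι ℂ v₁ * ι ℂ v₃)))) := by
  simp only [mul_assoc] at hvol
  have hle : wedge21 (Submodule.span ℂ ({u₁, u₂, u₃} : Set V))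
      (Submodule.span ℂ ({v₁, v₂, v₃} : Set V)) ≤
      LinearMap.ker (LinearMap.mulRight ℂ (ι ℂ u₂ * ι ℂ v₁) -
        ((vol.comp (LinearMap.mulRight ℂ (ι ℂ u₂ * ι ℂ v₁ * ι ℂ v₃))).smulRight
          (ι ℂ u₁ * (ι ℂ u₂ * (ι ℂ u₃ * (ι ℂ v₁ * ι ℂ v₂)))) -
         (vol.comp (LinearMap.mulRight ℂ (ι ℂ u₂ * ι ℂ v₁ * ι ℂ v₂))).smulRight
          (ι ℂ u₁ * (ι ℂ u₂ * (ι ℂ u₃ * (ι ℂ v₁ * ι ℂ v₃)))))) := by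
    rw [wedge21]
    refine Submodule.span_le.2 ?_
    rintro _ ⟨a, ha, b, hb, cc, hcc, rfl⟩
    obtain ⟨p₁, p₂, p₃, rfl⟩ := mem_span_triple' ha
    obtain ⟨q₁, q₂, q₃, rfl⟩ := mem_span_triple' hb
    obtain ⟨r₁, r₂, r₃, rfl⟩ := mem_span_triple' hcc
    simp only [SetLike.mem_coe, LinearMap.mem_ker, LinearMap.sub_apply,
      LinearMap.mulRight_apply, LinearMap.smulRight_apply, LinearMap.comp_apply]
    simp only [map_add, map_smul, add_mul, mul_add, smul_mul_assoc, mul_smul_comm, smul_smul,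
      mul_assoc, sw' u₁ u₂, sw' u₁ u₃, sw' u₁ v₁, sw' u₁ v₂, sw' u₁ v₃, sw' u₂ u₃, sw' u₂ v₁,
      sw' u₂ v₂, sw' u₂ v₃, sw' u₃ v₁, sw' u₃ v₂, sw' u₃ v₃, sw' v₁ v₂, sw' v₁ v₃, sw' v₂ v₃,
      sw u₁ u₂, sw u₁ u₃, sw u₁ v₁, sw u₁ v₂, sw u₁ v₃, sw u₂ u₃, sw u₂ v₁,
      sw u₂ v₂, sw u₂ v₃, sw u₃ v₁, sw u₃ v₂, sw u₃ v₃, sw v₁ v₂, sw v₁ v₃, sw v₂ v₃,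
      sq', ι_sq_zero, mul_neg, neg_mul, smul_neg, neg_neg,
      mul_zero, zero_mul, smul_zero, add_zero, zero_add, neg_zero, hvol, smul_eq_mul,
      map_neg, map_zero, mul_one]
    module
  have h0 := hle hx
  simp only [LinearMap.mem_ker, LinearMap.sub_apply, LinearMap.mulRight_apply,
    LinearMap.smulRight_apply, LinearMap.comp_apply] at h0
  exact sub_eq_zero.mp h0

set_option maxHeartbeats 3200000 in
/-- With `β₁ = u₁∧v₁∧v₂`, `β₂ = u₂∧v₁∧v₃`, `β₃ = (u₁+u₂)∧v₁∧(v₂+v₃)`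
and `α₁, α₂, α₃ ∈ ⋀²U₁∧U₂` such that `(αᵢ+βᵢ)∧(αⱼ+βⱼ) = 0` for all `i, j`, and a complex
number `c` with `vol(αᵢ∧βᵢ) = 0` and `vol(αᵢ∧βⱼ) = −c` for `i ≠ j`, the space of triples
`(λ₁,λ₂,λ₃) ∈ ℂ³` with `ω = ∑ λᵢ(αᵢ+βᵢ)` satisfying
`ω∧u₁∧u₂ = ω∧u₁∧(v₁+c·u₃) = ω∧u₂∧(v₁+c·u₃) = 0` is a linear subspace of `ℂ³` of
dimension at least 2. -/
theorem statement14 (V : Type*) [AddCommGroup V] [Module ℂ V]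
    (u₁ u₂ u₃ v₁ v₂ v₃ : V)
    (hli : LinearIndependent ℂ ![u₁, u₂, u₃, v₁, v₂, v₃])
    (hspan : Submodule.span ℂ ({u₁, u₂, u₃, v₁, v₂, v₃} : Set V) = ⊤)
    (vol : ExteriorAlgebra ℂ V →ₗ[ℂ] ℂ)
    (hvol : vol (ι ℂ u₁ * ι ℂ u₂ * ι ℂ u₃ * ι ℂ v₁ * ι ℂ v₂ * ι ℂ v₃) = 1)
    (α β : Fin 3 → ExteriorAlgebra ℂ V)
    (hα : ∀ i, α i ∈ wedge21 (Submodule.span ℂ ({u₁, u₂, u₃} : Set V))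
      (Submodule.span ℂ ({v₁, v₂, v₃} : Set V)))
    (hβ0 : β 0 = ι ℂ u₁ * ι ℂ v₁ * ι ℂ v₂)
    (hβ1 : β 1 = ι ℂ u₂ * ι ℂ v₁ * ι ℂ v₃)
    (hβ2 : β 2 = ι ℂ (u₁ + u₂) * ι ℂ v₁ * ι ℂ (v₂ + v₃))
    (hlag : ∀ i j, (α i + β i) * (α j + β j) = 0)
    (c : ℂ)
    (hzsq : ∀ i, vol (α i * β i) = 0)
    (hzc : ∀ i j, i ≠ j → vol (α i * β j) = -c) :
    2 ≤ finrank ℂ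
      ↥(LinearMap.ker ((LinearMap.mulRight ℂ (ι ℂ u₁ * ι ℂ u₂)).comp
          (Fintype.linearCombination ℂ fun i => α i + β i)) ⊓
        LinearMap.ker ((LinearMap.mulRight ℂ (ι ℂ u₁ * ι ℂ (v₁ + c • u₃))).comp
          (Fintype.linearCombination ℂ fun i => α i + β i)) ⊓
        LinearMap.ker ((LinearMap.mulRight ℂ (ι ℂ u₂ * ι ℂ (v₁ + c • u₃))).comp
          (Fintype.linearCombination ℂ fun i => α i + β i))) := by
  have hu1 : u₁ ∈ Submodule.span ℂ ({u₁, u₂, u₃} : Set V) := Submodule.subset_span (by simp)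
  have hu2 : u₂ ∈ Submodule.span ℂ ({u₁, u₂, u₃} : Set V) := Submodule.subset_span (by simp)
  have hu3 : u₃ ∈ Submodule.span ℂ ({u₁, u₂, u₃} : Set V) := Submodule.subset_span (by simp)
  -- abbreviations for the two basic 5-vectors
  have hι : ι ℂ (v₁ + c • u₃) = ι ℂ v₁ + c • ι ℂ u₃ := by simp
  -- scalar facts
  have ha0 : vol (α 0 * (ι ℂ u₁ * ι ℂ v₁ * ι ℂ v₂)) = 0 := by rw [← hβ0]; exact hzsq 0
  have ha1 : vol (α 1 * (ι ℂ u₁ * ι ℂ v₁ * ι ℂ v₂)) = -c := by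
    rw [← hβ0]; exact hzc 1 0 (by decide)
  have ha2 : vol (α 2 * (ι ℂ u₁ * ι ℂ v₁ * ι ℂ v₂)) = -c := by
    rw [← hβ0]; exact hzc 2 0 (by decide)
  have hq0 : vol (α 0 * (ι ℂ u₂ * ι ℂ v₁ * ι ℂ v₃)) = -c := by
    rw [← hβ1]; exact hzc 0 1 (by decide)
  have hq1 : vol (α 1 * (ι ℂ u₂ * ι ℂ v₁ * ι ℂ v₃)) = 0 := by rw [← hβ1]; exact hzsq 1
  have hq2 : vol (α 2 * (ι ℂ u₂ * ι ℂ v₁ * ι ℂ v₃)) = -c := by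
    rw [← hβ1]; exact hzc 2 1 (by decide)
  have hβ2exp : ∀ i, vol (α i * β 2) =
      vol (α i * (ι ℂ u₁ * ι ℂ v₁ * ι ℂ v₂)) + vol (α i * (ι ℂ u₁ * ι ℂ v₁ * ι ℂ v₃)) +
      vol (α i * (ι ℂ u₂ * ι ℂ v₁ * ι ℂ v₂)) + vol (α i * (ι ℂ u₂ * ι ℂ v₁ * ι ℂ v₃)) := by
    intro i
    rw [hβ2]
    simp only [map_add, add_mul, mul_add]
    ring
  have hp0 : vol (α 0 * (ι ℂ u₂ * ι ℂ v₁ * ι ℂ v₂)) =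
      -vol (α 0 * (ι ℂ u₁ * ι ℂ v₁ * ι ℂ v₃)) := by
    have h := hβ2exp 0
    rw [hzc 0 2 (by decide), ha0, hq0] at h
    linear_combination -h
  have hp1 : vol (α 1 * (ι ℂ u₂ * ι ℂ v₁ * ι ℂ v₂)) =
      -vol (α 1 * (ι ℂ u₁ * ι ℂ v₁ * ι ℂ v₃)) := by
    have h := hβ2exp 1
    rw [hzc 1 2 (by decide), ha1, hq1] at h
    linear_combination -h
  have hp2 : vol (α 2 * (ι ℂ u₂ * ι ℂ v₁ * ι ℂ v₂)) =
      2 * c - vol (α 2 * (ι ℂ u₁ * ι ℂ v₁ * ι ℂ v₃)) := by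
    have h := hβ2exp 2
    rw [hzsq 2, ha2, hq2] at h
    linear_combination -h
  -- β-products with the relevant 2-vectors
  have hb0a : β 0 * (ι ℂ u₁ * ι ℂ u₂) = 0 := by
    rw [hβ0]
    simp only [mul_assoc, sw' u₁ u₂, sw' u₁ u₃, sw' u₁ v₁, sw' u₁ v₂, sw' u₁ v₃, sw' u₂ u₃,
      sw' u₂ v₁, sw' u₂ v₂, sw' u₂ v₃, sw' u₃ v₁, sw' u₃ v₂, sw' u₃ v₃, sw' v₁ v₂, sw' v₁ v₃,
      sw' v₂ v₃, sw u₁ u₂, sw u₁ u₃, sw u₁ v₁, sw u₁ v₂, sw u₁ v₃, sw u₂ u₃, sw u₂ v₁,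
      sw u₂ v₂, sw u₂ v₃, sw u₃ v₁, sw u₃ v₂, sw u₃ v₃, sw v₁ v₂, sw v₁ v₃, sw v₂ v₃,
      sq', ι_sq_zero, mul_neg, neg_mul, neg_neg, mul_zero, zero_mul, neg_zero]
  have hb1a : β 1 * (ι ℂ u₁ * ι ℂ u₂) = 0 := by
    rw [hβ1]
    simp only [mul_assoc, sw' u₁ u₂, sw' u₁ u₃, sw' u₁ v₁, sw' u₁ v₂, sw' u₁ v₃, sw' u₂ u₃,
      sw' u₂ v₁, sw' u₂ v₂, sw' u₂ v₃, sw' u₃ v₁, sw' u₃ v₂, sw' u₃ v₃, sw' v₁ v₂, sw' v₁ v₃,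
      sw' v₂ v₃, sw u₁ u₂, sw u₁ u₃, sw u₁ v₁, sw u₁ v₂, sw u₁ v₃, sw u₂ u₃, sw u₂ v₁,
      sw u₂ v₂, sw u₂ v₃, sw u₃ v₁, sw u₃ v₂, sw u₃ v₃, sw v₁ v₂, sw v₁ v₃, sw v₂ v₃,
      sq', ι_sq_zero, mul_neg, neg_mul, neg_neg, mul_zero, zero_mul, neg_zero]
  have hb2a : β 2 * (ι ℂ u₁ * ι ℂ u₂) = 0 := by
    rw [hβ2]
    simp only [map_add, add_mul, mul_add, mul_assoc, sw' u₁ u₂, sw' u₁ u₃, sw' u₁ v₁,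
      sw' u₁ v₂, sw' u₁ v₃, sw' u₂ u₃, sw' u₂ v₁, sw' u₂ v₂, sw' u₂ v₃, sw' u₃ v₁, sw' u₃ v₂,
      sw' u₃ v₃, sw' v₁ v₂, sw' v₁ v₃, sw' v₂ v₃, sw u₁ u₂, sw u₁ u₃, sw u₁ v₁, sw u₁ v₂,
      sw u₁ v₃, sw u₂ u₃, sw u₂ v₁, sw u₂ v₂, sw u₂ v₃, sw u₃ v₁, sw u₃ v₂, sw u₃ v₃,
      sw v₁ v₂, sw v₁ v₃, sw v₂ v₃, sq', ι_sq_zero, mul_neg, neg_mul, neg_neg, mul_zero,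
      zero_mul, neg_zero, add_zero, zero_add]
  have hb00 : β 0 * (ι ℂ u₁ * ι ℂ v₁) = 0 := by
    rw [hβ0]
    simp only [mul_assoc, sw' u₁ u₂, sw' u₁ u₃, sw' u₁ v₁, sw' u₁ v₂, sw' u₁ v₃, sw' u₂ u₃,
      sw' u₂ v₁, sw' u₂ v₂, sw' u₂ v₃, sw' u₃ v₁, sw' u₃ v₂, sw' u₃ v₃, sw' v₁ v₂, sw' v₁ v₃,
      sw' v₂ v₃, sw u₁ u₂, sw u₁ u₃, sw u₁ v₁, sw u₁ v₂, sw u₁ v₃, sw u₂ u₃, sw u₂ v₁,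
      sw u₂ v₂, sw u₂ v₃, sw u₃ v₁, sw u₃ v₂, sw u₃ v₃, sw v₁ v₂, sw v₁ v₃, sw v₂ v₃,
      sq', ι_sq_zero, mul_neg, neg_mul, neg_neg, mul_zero, zero_mul, neg_zero]
  have hb01 : β 0 * (ι ℂ u₁ * ι ℂ u₃) = 0 := by
    rw [hβ0]
    simp only [mul_assoc, sw' u₁ u₂, sw' u₁ u₃, sw' u₁ v₁, sw' u₁ v₂, sw' u₁ v₃, sw' u₂ u₃,
      sw' u₂ v₁, sw' u₂ v₂, sw' u₂ v₃, sw' u₃ v₁, sw' u₃ v₂, sw' u₃ v₃, sw' v₁ v₂, sw' v₁ v₃,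
      sw' v₂ v₃, sw u₁ u₂, sw u₁ u₃, sw u₁ v₁, sw u₁ v₂, sw u₁ v₃, sw u₂ u₃, sw u₂ v₁,
      sw u₂ v₂, sw u₂ v₃, sw u₃ v₁, sw u₃ v₂, sw u₃ v₃, sw v₁ v₂, sw v₁ v₃, sw v₂ v₃,
      sq', ι_sq_zero, mul_neg, neg_mul, neg_neg, mul_zero, zero_mul, neg_zero]
  have hb02 : β 0 * (ι ℂ u₂ * ι ℂ v₁) = 0 := by
    rw [hβ0]
    simp only [mul_assoc, sw' u₁ u₂, sw' u₁ u₃, sw' u₁ v₁, sw' u₁ v₂, sw' u₁ v₃, sw' u₂ u₃,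
      sw' u₂ v₁, sw' u₂ v₂, sw' u₂ v₃, sw' u₃ v₁, sw' u₃ v₂, sw' u₃ v₃, sw' v₁ v₂, sw' v₁ v₃,
      sw' v₂ v₃, sw u₁ u₂, sw u₁ u₃, sw u₁ v₁, sw u₁ v₂, sw u₁ v₃, sw u₂ u₃, sw u₂ v₁,
      sw u₂ v₂, sw u₂ v₃, sw u₃ v₁, sw u₃ v₂, sw u₃ v₃, sw v₁ v₂, sw v₁ v₃, sw v₂ v₃,
      sq', ι_sq_zero, mul_neg, neg_mul, neg_neg, mul_zero, zero_mul, neg_zero]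
  have hb03 : β 0 * (ι ℂ u₂ * ι ℂ u₃) =
      ι ℂ u₁ * (ι ℂ u₂ * (ι ℂ u₃ * (ι ℂ v₁ * ι ℂ v₂))) := by
    rw [hβ0]
    simp only [mul_assoc, sw' u₁ u₂, sw' u₁ u₃, sw' u₁ v₁, sw' u₁ v₂, sw' u₁ v₃, sw' u₂ u₃,
      sw' u₂ v₁, sw' u₂ v₂, sw' u₂ v₃, sw' u₃ v₁, sw' u₃ v₂, sw' u₃ v₃, sw' v₁ v₂, sw' v₁ v₃,
      sw' v₂ v₃, sw u₁ u₂, sw u₁ u₃, sw u₁ v₁, sw u₁ v₂, sw u₁ v₃, sw u₂ u₃, sw u₂ v₁,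
      sw u₂ v₂, sw u₂ v₃, sw u₃ v₁, sw u₃ v₂, sw u₃ v₃, sw v₁ v₂, sw v₁ v₃, sw v₂ v₃,
      sq', ι_sq_zero, mul_neg, neg_mul, neg_neg, mul_zero, zero_mul, neg_zero]
  have hb10 : β 1 * (ι ℂ u₁ * ι ℂ v₁) = 0 := by
    rw [hβ1]
    simp only [mul_assoc, sw' u₁ u₂, sw' u₁ u₃, sw' u₁ v₁, sw' u₁ v₂, sw' u₁ v₃, sw' u₂ u₃,
      sw' u₂ v₁, sw' u₂ v₂, sw' u₂ v₃, sw' u₃ v₁, sw' u₃ v₂, sw' u₃ v₃, sw' v₁ v₂, sw' v₁ v₃,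
      sw' v₂ v₃, sw u₁ u₂, sw u₁ u₃, sw u₁ v₁, sw u₁ v₂, sw u₁ v₃, sw u₂ u₃, sw u₂ v₁,
      sw u₂ v₂, sw u₂ v₃, sw u₃ v₁, sw u₃ v₂, sw u₃ v₃, sw v₁ v₂, sw v₁ v₃, sw v₂ v₃,
      sq', ι_sq_zero, mul_neg, neg_mul, neg_neg, mul_zero, zero_mul, neg_zero]
  have hb11 : β 1 * (ι ℂ u₁ * ι ℂ u₃) =
      -(ι ℂ u₁ * (ι ℂ u₂ * (ι ℂ u₃ * (ι ℂ v₁ * ι ℂ v₃)))) := by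
    rw [hβ1]
    simp only [mul_assoc, sw' u₁ u₂, sw' u₁ u₃, sw' u₁ v₁, sw' u₁ v₂, sw' u₁ v₃, sw' u₂ u₃,
      sw' u₂ v₁, sw' u₂ v₂, sw' u₂ v₃, sw' u₃ v₁, sw' u₃ v₂, sw' u₃ v₃, sw' v₁ v₂, sw' v₁ v₃,
      sw' v₂ v₃, sw u₁ u₂, sw u₁ u₃, sw u₁ v₁, sw u₁ v₂, sw u₁ v₃, sw u₂ u₃, sw u₂ v₁,
      sw u₂ v₂, sw u₂ v₃, sw u₃ v₁, sw u₃ v₂, sw u₃ v₃, sw v₁ v₂, sw v₁ v₃, sw v₂ v₃,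
      sq', ι_sq_zero, mul_neg, neg_mul, neg_neg, mul_zero, zero_mul, neg_zero]
  have hb12 : β 1 * (ι ℂ u₂ * ι ℂ v₁) = 0 := by
    rw [hβ1]
    simp only [mul_assoc, sw' u₁ u₂, sw' u₁ u₃, sw' u₁ v₁, sw' u₁ v₂, sw' u₁ v₃, sw' u₂ u₃,
      sw' u₂ v₁, sw' u₂ v₂, sw' u₂ v₃, sw' u₃ v₁, sw' u₃ v₂, sw' u₃ v₃, sw' v₁ v₂, sw' v₁ v₃,
      sw' v₂ v₃, sw u₁ u₂, sw u₁ u₃, sw u₁ v₁, sw u₁ v₂, sw u₁ v₃, sw u₂ u₃, sw u₂ v₁,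
      sw u₂ v₂, sw u₂ v₃, sw u₃ v₁, sw u₃ v₂, sw u₃ v₃, sw v₁ v₂, sw v₁ v₃, sw v₂ v₃,
      sq', ι_sq_zero, mul_neg, neg_mul, neg_neg, mul_zero, zero_mul, neg_zero]
  have hb13 : β 1 * (ι ℂ u₂ * ι ℂ u₃) = 0 := by
    rw [hβ1]
    simp only [mul_assoc, sw' u₁ u₂, sw' u₁ u₃, sw' u₁ v₁, sw' u₁ v₂, sw' u₁ v₃, sw' u₂ u₃,
      sw' u₂ v₁, sw' u₂ v₂, sw' u₂ v₃, sw' u₃ v₁, sw' u₃ v₂, sw' u₃ v₃, sw' v₁ v₂, sw' v₁ v₃,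
      sw' v₂ v₃, sw u₁ u₂, sw u₁ u₃, sw u₁ v₁, sw u₁ v₂, sw u₁ v₃, sw u₂ u₃, sw u₂ v₁,
      sw u₂ v₂, sw u₂ v₃, sw u₃ v₁, sw u₃ v₂, sw u₃ v₃, sw v₁ v₂, sw v₁ v₃, sw v₂ v₃,
      sq', ι_sq_zero, mul_neg, neg_mul, neg_neg, mul_zero, zero_mul, neg_zero]
  have hb20 : β 2 * (ι ℂ u₁ * ι ℂ v₁) = 0 := by
    rw [hβ2]
    simp only [map_add, add_mul, mul_add, mul_assoc, sw' u₁ u₂, sw' u₁ u₃, sw' u₁ v₁,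
      sw' u₁ v₂, sw' u₁ v₃, sw' u₂ u₃, sw' u₂ v₁, sw' u₂ v₂, sw' u₂ v₃, sw' u₃ v₁, sw' u₃ v₂,
      sw' u₃ v₃, sw' v₁ v₂, sw' v₁ v₃, sw' v₂ v₃, sw u₁ u₂, sw u₁ u₃, sw u₁ v₁, sw u₁ v₂,
      sw u₁ v₃, sw u₂ u₃, sw u₂ v₁, sw u₂ v₂, sw u₂ v₃, sw u₃ v₁, sw u₃ v₂, sw u₃ v₃,
      sw v₁ v₂, sw v₁ v₃, sw v₂ v₃, sq', ι_sq_zero, mul_neg, neg_mul, neg_neg, mul_zero,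
      zero_mul, neg_zero, add_zero, zero_add]
  have hb21 : β 2 * (ι ℂ u₁ * ι ℂ u₃) =
      -(ι ℂ u₁ * (ι ℂ u₂ * (ι ℂ u₃ * (ι ℂ v₁ * ι ℂ v₂)))) -
        ι ℂ u₁ * (ι ℂ u₂ * (ι ℂ u₃ * (ι ℂ v₁ * ι ℂ v₃))) := by
    rw [hβ2]
    simp only [map_add, add_mul, mul_add, mul_assoc, sw' u₁ u₂, sw' u₁ u₃, sw' u₁ v₁,
      sw' u₁ v₂, sw' u₁ v₃, sw' u₂ u₃, sw' u₂ v₁, sw' u₂ v₂, sw' u₂ v₃, sw' u₃ v₁, sw' u₃ v₂,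
      sw' u₃ v₃, sw' v₁ v₂, sw' v₁ v₃, sw' v₂ v₃, sw u₁ u₂, sw u₁ u₃, sw u₁ v₁, sw u₁ v₂,
      sw u₁ v₃, sw u₂ u₃, sw u₂ v₁, sw u₂ v₂, sw u₂ v₃, sw u₃ v₁, sw u₃ v₂, sw u₃ v₃,
      sw v₁ v₂, sw v₁ v₃, sw v₂ v₃, sq', ι_sq_zero, mul_neg, neg_mul, neg_neg, mul_zero,
      zero_mul, neg_zero, add_zero, zero_add]
    module
  have hb22 : β 2 * (ι ℂ u₂ * ι ℂ v₁) = 0 := by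
    rw [hβ2]
    simp only [map_add, add_mul, mul_add, mul_assoc, sw' u₁ u₂, sw' u₁ u₃, sw' u₁ v₁,
      sw' u₁ v₂, sw' u₁ v₃, sw' u₂ u₃, sw' u₂ v₁, sw' u₂ v₂, sw' u₂ v₃, sw' u₃ v₁, sw' u₃ v₂,
      sw' u₃ v₃, sw' v₁ v₂, sw' v₁ v₃, sw' v₂ v₃, sw u₁ u₂, sw u₁ u₃, sw u₁ v₁, sw u₁ v₂,
      sw u₁ v₃, sw u₂ u₃, sw u₂ v₁, sw u₂ v₂, sw u₂ v₃, sw u₃ v₁, sw u₃ v₂, sw u₃ v₃,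
      sw v₁ v₂, sw v₁ v₃, sw v₂ v₃, sq', ι_sq_zero, mul_neg, neg_mul, neg_neg, mul_zero,
      zero_mul, neg_zero, add_zero, zero_add]
  have hb23 : β 2 * (ι ℂ u₂ * ι ℂ u₃) =
      ι ℂ u₁ * (ι ℂ u₂ * (ι ℂ u₃ * (ι ℂ v₁ * ι ℂ v₂))) +
        ι ℂ u₁ * (ι ℂ u₂ * (ι ℂ u₃ * (ι ℂ v₁ * ι ℂ v₃))) := by
    rw [hβ2]
    simp only [map_add, add_mul, mul_add, mul_assoc, sw' u₁ u₂, sw' u₁ u₃, sw' u₁ v₁,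
      sw' u₁ v₂, sw' u₁ v₃, sw' u₂ u₃, sw' u₂ v₁, sw' u₂ v₂, sw' u₂ v₃, sw' u₃ v₁, sw' u₃ v₂,
      sw' u₃ v₃, sw' v₁ v₂, sw' v₁ v₃, sw' v₂ v₃, sw u₁ u₂, sw u₁ u₃, sw u₁ v₁, sw u₁ v₂,
      sw u₁ v₃, sw u₂ u₃, sw u₂ v₁, sw u₂ v₂, sw u₂ v₃, sw u₃ v₁, sw u₃ v₂, sw u₃ v₃,
      sw v₁ v₂, sw v₁ v₃, sw v₂ v₃, sq', ι_sq_zero, mul_neg, neg_mul, neg_neg, mul_zero,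
      zero_mul, neg_zero, add_zero, zero_add]
  -- the per-index product formulas
  have K10 : (α 0 + β 0) * (ι ℂ u₁ * ι ℂ u₂) = 0 := by
    rw [add_mul, keyU (hα 0) hu1 hu2, hb0a, add_zero]
  have K11 : (α 1 + β 1) * (ι ℂ u₁ * ι ℂ u₂) = 0 := by
    rw [add_mul, keyU (hα 1) hu1 hu2, hb1a, add_zero]
  have K12 : (α 2 + β 2) * (ι ℂ u₁ * ι ℂ u₂) = 0 := by
    rw [add_mul, keyU (hα 2) hu1 hu2, hb2a, add_zero]
  have K20 : (α 0 + β 0) * (ι ℂ u₁ * ι ℂ (v₁ + c • u₃)) =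
      vol (α 0 * (ι ℂ u₁ * ι ℂ v₁ * ι ℂ v₃)) •
        (ι ℂ u₁ * (ι ℂ u₂ * (ι ℂ u₃ * (ι ℂ v₁ * ι ℂ v₂)))) := by
    rw [hι, mul_add, mul_smul_comm, mul_add, mul_smul_comm, add_mul, add_mul,
      keyC vol hvol (hα 0), keyU (hα 0) hu1 hu3, hb00, hb01, ha0]
    module
  have K21 : (α 1 + β 1) * (ι ℂ u₁ * ι ℂ (v₁ + c • u₃)) =
      vol (α 1 * (ι ℂ u₁ * ι ℂ v₁ * ι ℂ v₃)) •
        (ι ℂ u₁ * (ι ℂ u₂ * (ι ℂ u₃ * (ι ℂ v₁ * ι ℂ v₂)))) := by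
    rw [hι, mul_add, mul_smul_comm, mul_add, mul_smul_comm, add_mul, add_mul,
      keyC vol hvol (hα 1), keyU (hα 1) hu1 hu3, hb10, hb11, ha1]
    module
  have K22 : (α 2 + β 2) * (ι ℂ u₁ * ι ℂ (v₁ + c • u₃)) =
      (vol (α 2 * (ι ℂ u₁ * ι ℂ v₁ * ι ℂ v₃)) - c) •
        (ι ℂ u₁ * (ι ℂ u₂ * (ι ℂ u₃ * (ι ℂ v₁ * ι ℂ v₂)))) := by
    rw [hι, mul_add, mul_smul_comm, mul_add, mul_smul_comm, add_mul, add_mul,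
      keyC vol hvol (hα 2), keyU (hα 2) hu1 hu3, hb20, hb21, ha2]
    module
  have K30 : (α 0 + β 0) * (ι ℂ u₂ * ι ℂ (v₁ + c • u₃)) =
      vol (α 0 * (ι ℂ u₁ * ι ℂ v₁ * ι ℂ v₃)) •
        (ι ℂ u₁ * (ι ℂ u₂ * (ι ℂ u₃ * (ι ℂ v₁ * ι ℂ v₃)))) := by
    rw [hι, mul_add, mul_smul_comm, mul_add, mul_smul_comm, add_mul, add_mul,
      keyD vol hvol (hα 0), keyU (hα 0) hu2 hu3, hb02, hb03, hq0, hp0]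
    module
  have K31 : (α 1 + β 1) * (ι ℂ u₂ * ι ℂ (v₁ + c • u₃)) =
      vol (α 1 * (ι ℂ u₁ * ι ℂ v₁ * ι ℂ v₃)) •
        (ι ℂ u₁ * (ι ℂ u₂ * (ι ℂ u₃ * (ι ℂ v₁ * ι ℂ v₃)))) := by
    rw [hι, mul_add, mul_smul_comm, mul_add, mul_smul_comm, add_mul, add_mul,
      keyD vol hvol (hα 1), keyU (hα 1) hu2 hu3, hb12, hb13, hq1, hp1]
    module
  have K32 : (α 2 + β 2) * (ι ℂ u₂ * ι ℂ (v₁ + c • u₃)) =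
      (vol (α 2 * (ι ℂ u₁ * ι ℂ v₁ * ι ℂ v₃)) - c) •
        (ι ℂ u₁ * (ι ℂ u₂ * (ι ℂ u₃ * (ι ℂ v₁ * ι ℂ v₃)))) := by
    rw [hι, mul_add, mul_smul_comm, mul_add, mul_smul_comm, add_mul, add_mul,
      keyD vol hvol (hα 2), keyU (hα 2) hu2 hu3, hb22, hb23, hq2, hp2]
    module
  -- the linear functional
  set g : Fin 3 → ℂ := ![vol (α 0 * (ι ℂ u₁ * ι ℂ v₁ * ι ℂ v₃)),
    vol (α 1 * (ι ℂ u₁ * ι ℂ v₁ * ι ℂ v₃)),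
    vol (α 2 * (ι ℂ u₁ * ι ℂ v₁ * ι ℂ v₃)) - c] with hg
  have hker : LinearMap.ker (Fintype.linearCombination ℂ g) ≤
      (LinearMap.ker ((LinearMap.mulRight ℂ (ι ℂ u₁ * ι ℂ u₂)).comp
          (Fintype.linearCombination ℂ fun i => α i + β i)) ⊓
        LinearMap.ker ((LinearMap.mulRight ℂ (ι ℂ u₁ * ι ℂ (v₁ + c • u₃))).comp
          (Fintype.linearCombination ℂ fun i => α i + β i)) ⊓
        LinearMap.ker ((LinearMap.mulRight ℂ (ι ℂ u₂ * ι ℂ (v₁ + c • u₃))).comp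
          (Fintype.linearCombination ℂ fun i => α i + β i))) := by
    intro lam hlam
    rw [LinearMap.mem_ker, Fintype.linearCombination_apply, Fin.sum_univ_three] at hlam
    have hlam' : lam 0 * vol (α 0 * (ι ℂ u₁ * ι ℂ v₁ * ι ℂ v₃)) +
        lam 1 * vol (α 1 * (ι ℂ u₁ * ι ℂ v₁ * ι ℂ v₃)) +
        lam 2 * (vol (α 2 * (ι ℂ u₁ * ι ℂ v₁ * ι ℂ v₃)) - c) = 0 := by
      simpa [hg] using hlam
    refine Submodule.mem_inf.mpr ⟨Submodule.mem_inf.mpr ⟨?_, ?_⟩, ?_⟩ <;>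
      rw [LinearMap.mem_ker, LinearMap.comp_apply, Fintype.linearCombination_apply,
        Fin.sum_univ_three, LinearMap.mulRight_apply, add_mul, add_mul,
        smul_mul_assoc, smul_mul_assoc, smul_mul_assoc]
    · rw [K10, K11, K12]
      simp
    · rw [K20, K21, K22, smul_smul, smul_smul, smul_smul, ← add_smul, ← add_smul, hlam',
        zero_smul]
    · rw [K30, K31, K32, smul_smul, smul_smul, smul_smul, ← add_smul, ← add_smul, hlam',
        zero_smul]
  have hrn := LinearMap.finrank_range_add_finrank_ker (Fintype.linearCombination ℂ g)
  rw [show finrank ℂ (Fin 3 → ℂ) = 3 from by simp] at hrn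
  have hr1 : finrank ℂ (LinearMap.range (Fintype.linearCombination ℂ g)) ≤ 1 := by
    simpa using Submodule.finrank_le (LinearMap.range (Fintype.linearCombination ℂ g))
  have h2 : 2 ≤ finrank ℂ (LinearMap.ker (Fintype.linearCombination ℂ g)) := by omega
  exact le_trans h2 (Submodule.finrank_mono hker)
end
end

section
/- Let n ≥ 1 and let M and R be symmetric n×n complex matrices. Suppose v ∈ ℂⁿ is a nonzero vector with Mv = 0 and vᵀRv = 0. Then trace(adjugate(M)·R) = 0; equivalently the directional derivative at t = 0 of the polynomial t ↦ det(M + tR) vanishes. (This expresses that the discriminant hypersurface of a linear system of quadrics is singular at any quadric of the system that is singular at a point of the base locus.) -/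
open Matrix

lemma aux_core {n : ℕ} (k : Fin n) (N S : Matrix (Fin n) (Fin n) ℂ)
    (hrow : ∀ j, N k j = 0) (hcol : ∀ i, N i k = 0) (hS : S k k = 0) :
    (N.adjugate * S).trace = 0 := by
  have hadj : ∀ i j, N.adjugate i j ≠ 0 → i = k ∧ j = k := by
    intro i j h
    by_contra hc
    apply h
    rw [adjugate_apply]
    rcases eq_or_ne j k with hjk | hj
    · subst hjk
      have hik : i ≠ j := fun hij => hc ⟨hij, rfl⟩
      apply det_eq_zero_of_column_eq_zero j
      intro l
      rw [updateRow_apply]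
      split
      · exact Pi.single_eq_of_ne (Ne.symm hik) 1
      · exact hcol l
    · apply det_eq_zero_of_row_eq_zero k
      intro l
      rw [updateRow_apply, if_neg hj.symm]
      exact hrow l
  have htr : (N.adjugate * S).trace = ∑ i, ∑ j, N.adjugate i j * S j i := by
    simp [trace, diag, mul_apply]
  rw [htr]
  rw [Finset.sum_eq_zero]
  intro i _
  rw [Finset.sum_eq_zero]
  intro j _
  by_cases h : N.adjugate i j = 0
  · rw [h, zero_mul]
  · obtain ⟨rfl, rfl⟩ := hadj i j h
    rw [hS, mul_zero]

/-- Let `M` and `R` be symmetric `n×n` complex matrices, and suppose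
`v ∈ ℂⁿ` is nonzero with `Mv = 0` and `vᵀRv = 0`. Then `trace (adjugate M * R) = 0`,
i.e. the directional derivative at `t = 0` of `t ↦ det (M + tR)` vanishes. -/
theorem statement15 (n : ℕ) (hn : 1 ≤ n) (M R : Matrix (Fin n) (Fin n) ℂ)
    (hM : M.IsSymm) (hR : R.IsSymm)
    (v : Fin n → ℂ) (hv : v ≠ 0)
    (hMv : M.mulVec v = 0) (hRv : v ⬝ᵥ R.mulVec v = 0) :
    (M.adjugate * R).trace = 0 := by
  obtain ⟨k, hk⟩ : ∃ k, v k ≠ 0 := by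
    by_contra h
    push_neg at h
    exact hv (funext h)
  set P : Matrix (Fin n) (Fin n) ℂ := (1 : Matrix (Fin n) (Fin n) ℂ).updateCol k v with hP
  have hdetP : P.det = v k := by
    have h := congrFun (LinearMap.congr_fun cramer_one v) k
    rw [cramer_apply] at h
    rw [hP]
    exact h
  have hPe : P.mulVec (Pi.single k 1) = v := by
    funext i
    simp [mulVec, dotProduct_single, hP, updateCol_apply]
  set M' := Pᵀ * M * P with hM'
  set R' := Pᵀ * R * P with hR'
  have hM'col : ∀ i, M' i k = 0 := by
    have h0 : M'.mulVec (Pi.single k 1) = 0 := by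
      rw [hM', ← mulVec_mulVec, ← mulVec_mulVec, hPe, hMv, mulVec_zero]
    intro i
    have := congrFun h0 i
    simpa [mulVec, dotProduct_single] using this
  have hM'symm : M'ᵀ = M' := by
    rw [hM', transpose_mul, transpose_mul, transpose_transpose, hM.eq, mul_assoc]
  have hM'row : ∀ j, M' k j = 0 := by
    intro j
    have := congrFun (congrFun hM'symm j) k
    simp only [transpose_apply] at this
    rw [this]
    exact hM'col j
  have hR'kk : R' k k = 0 := by
    have h1 : R' k k = Pi.single k (1:ℂ) ⬝ᵥ R'.mulVec (Pi.single k (1:ℂ)) := by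
      simp [mulVec, dotProduct_single, single_dotProduct]
    rw [h1, hR', ← mulVec_mulVec, ← mulVec_mulVec, hPe, dotProduct_mulVec,
      vecMul_transpose, hPe]
    exact hRv
  have hcore := aux_core k M' R' hM'row hM'col hR'kk
  have h2 : ∀ X : Matrix (Fin n) (Fin n) ℂ, Pᵀ.adjugate * (Pᵀ * X) = P.det • X := by
    intro X
    rw [← mul_assoc, adjugate_mul, det_transpose, smul_mul_assoc, one_mul]
  have h3 : ∀ X : Matrix (Fin n) (Fin n) ℂ, P * (P.adjugate * X) = P.det • X := by
    intro X
    rw [← mul_assoc, mul_adjugate, smul_mul_assoc, one_mul]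
  have htr : (M'.adjugate * R').trace = P.det ^ 2 * (M.adjugate * R).trace := by
    have h1 : M'.adjugate = P.adjugate * (M.adjugate * Pᵀ.adjugate) := by
      rw [hM', adjugate_mul_distrib, adjugate_mul_distrib]
    rw [h1, hR']
    have e1 : P.adjugate * (M.adjugate * Pᵀ.adjugate) * (Pᵀ * R * P)
        = P.det • (P.adjugate * (M.adjugate * (R * P))) := by
      simp only [Matrix.mul_assoc]
      rw [h2 (R * P), Matrix.mul_smul, Matrix.mul_smul]
    rw [e1, trace_smul, trace_mul_comm]
    have e2 : M.adjugate * (R * P) * P.adjugate = P.det • (M.adjugate * R) := by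
      simp only [Matrix.mul_assoc]
      rw [show R * (P * P.adjugate) = P.det • R by rw [mul_adjugate, Matrix.mul_smul, Matrix.mul_one],
        Matrix.mul_smul]
    rw [e2, trace_smul, smul_eq_mul, smul_eq_mul]
    ring
  rw [hcore] at htr
  have hd : P.det ^ 2 ≠ 0 := by
    rw [hdetP]; exact pow_ne_zero _ hk
  exact (mul_eq_zero.mp htr.symm).resolve_left hd
end
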